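/- arXiv:1904.07375 — 3 statements merged into one kernel-verified Lean document; each statement's English description precedes it below -/
import Mathlib

section
/- Let (X_j) be simple random walk on ℤ started at 0, and let x(n) be a sequence with x(n) → ∞ and x(n) = o(√n) as n → ∞. Then lim_{n→∞} (x(n)²/n) · log P( max_{j≤n} |X_j| ≤ x(n) ) = −π²/8. -/
open MeasureTheory ProbabilityTheory Filter Real
open scoped ENNReal NNReal

noncomputable section

instance : MeasurableSpace (List ℕ) := ⊤

/-- Ulam–Harris rooted trees; a vertex is encoded as the reversed list of the child
indices along the path from the root (so the parent of `i :: v` is `v`, and the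
root is `[]`).  The children of a vertex are labelled `0, 1, …`, and the set of
children of every vertex is finite. -/
structure GWTree where
  mem : List ℕ → Prop
  root_mem : mem []
  parent_mem : ∀ i v, mem (i :: v) → mem v
  sibling_mem : ∀ i j v, mem (i :: v) → j ≤ i → mem (j :: v)
  fin_children : ∀ v, {i | mem (i :: v)}.Finite

namespace GWTree

/-- The number of children of `v` in `T`. -/
def deg (T : GWTree) (v : List ℕ) : ℕ := (T.fin_children v).toFinset.card

/-- Transition probabilities of the simple random walk on `T`: from a vertex `u` the
walk moves to a uniformly chosen neighbour of `u` (its parent `u.tail`, if `u` is not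
the root, or one of its children `i :: u`). -/
def step (T : GWTree) (u v : List ℕ) : ℝ≥0∞ := by
  classical
  exact if (u ≠ [] ∧ v = u.tail) ∨ (∃ i, v = i :: u ∧ T.mem v) then
    ((T.deg u + (if u = [] then 0 else 1) : ℕ) : ℝ≥0∞)⁻¹
  else 0

end GWTree

instance : MeasurableSpace GWTree :=
  MeasurableSpace.comap (fun T : GWTree => T.mem) inferInstance

/-- The tree generated by an assignment `f` of numbers of children to the potential
vertices: `i :: v` is a vertex iff `v` is a vertex and `i < f v`. -/
def genMem (f : List ℕ → ℕ) : List ℕ → Prop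
  | [] => True
  | i :: v => genMem f v ∧ i < f v

/-- The Galton–Watson tree built from the offspring data `f`. -/
def genTree (f : List ℕ → ℕ) : GWTree where
  mem := genMem f
  root_mem := trivial
  parent_mem := fun _ _ h => h.1
  sibling_mem := fun _ _ _ h hj => ⟨h.1, lt_of_le_of_lt hj h.2⟩
  fin_children := fun v => (Set.finite_Iio (f v)).subset fun _ hi => hi.2

/-- `GW` is the Galton–Watson measure with offspring distribution `ν`: the image of an
i.i.d. family (indexed by the potential vertices) of `ν`-distributed offspring numbers
under the map generating the corresponding tree. -/
def IsGW (ν : Measure ℕ) (GW : Measure GWTree) : Prop :=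
  ∃ (Ω : Type) (_ : MeasurableSpace Ω) (P : Measure Ω),
    IsProbabilityMeasure P ∧
    ∃ ξ : List ℕ → Ω → ℕ,
      iIndepFun ξ P ∧ (∀ v, Measurable (ξ v)) ∧
      (∀ v, P.map (ξ v) = ν) ∧
      GW = P.map fun ω => genTree fun v => ξ v ω

/-- `P` is the law of the simple random walk on `T` started at `v₀`, characterised
through its finite-dimensional distributions. -/
def IsSRWFrom (T : GWTree) (v₀ : List ℕ) (P : Measure (ℕ → List ℕ)) : Prop :=
  IsProbabilityMeasure P ∧
  ∀ (x : ℕ → List ℕ) (n : ℕ),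
    P {ω | ∀ j ≤ n, ω j = x j} =
      (if x 0 = v₀ then 1 else 0) * ∏ j ∈ Finset.range n, T.step (x j) (x (j + 1))

/-- `P` is the law of the simple random walk on `T` started at the root. -/
def IsSRW (T : GWTree) (P : Measure (ℕ → List ℕ)) : Prop := IsSRWFrom T ([] : List ℕ) P

/-- The maximal displacement (distance from the root) of the path `ω` up to time `n`. -/
def maxDisp (n : ℕ) (ω : ℕ → List ℕ) : ℕ :=
  (Finset.range (n + 1)).sup fun j => (ω j).length

/-- The event that the tree `T` survives (is infinite). -/
def survives (T : GWTree) : Prop := {v | T.mem v}.Infinite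

/-- `P` is the law of the simple random walk on `ℤ` started at `0`, characterised through
its finite-dimensional distributions (each step is uniform on `{-1, +1}`). -/
def IsSRWZ (P : Measure (ℕ → ℤ)) : Prop :=
  IsProbabilityMeasure P ∧
  ∀ (x : ℕ → ℤ) (n : ℕ),
    P {ω | ∀ j ≤ n, ω j = x j} =
      (if x 0 = 0 then 1 else 0) *
        ∏ j ∈ Finset.range n,
          (if x (j + 1) - x j = 1 ∨ x (j + 1) - x j = -1 then (2 : ℝ≥0∞)⁻¹ else 0)

namespace SDW

def Ib (m : ℕ) : Finset ℤ := Finset.Icc (-(m:ℤ)) m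
def a (m : ℕ) (i j : ℤ) : ℝ := if |i| ≤ (m:ℤ) ∧ |j| ≤ (m:ℤ) ∧ |i - j| = 1 then 1/2 else 0
def T (m : ℕ) (v : ℤ → ℝ) (j : ℤ) : ℝ := ∑ i ∈ Ib m, a m i j * v i
def dlt : ℤ → ℝ := fun i => if i = 0 then 1 else 0
def inn (m : ℕ) (u v : ℤ → ℝ) : ℝ := ∑ i ∈ Ib m, u i * v i
def th (m : ℕ) : ℝ := π / (2*m + 2)
def lam (m : ℕ) : ℝ := Real.cos (th m)
def ph (m : ℕ) (i : ℤ) : ℝ := if |i| ≤ (m:ℤ) then Real.cos (th m * i) else 0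
def oneI (m : ℕ) (i : ℤ) : ℝ := if |i| ≤ (m:ℤ) then 1 else 0

lemma mem_Ib {m : ℕ} {i : ℤ} : i ∈ Ib m ↔ |i| ≤ (m:ℤ) := by
  simp [Ib, Finset.mem_Icc, abs_le]

lemma a_nonneg (m : ℕ) (i j : ℤ) : 0 ≤ a m i j := by
  unfold a; split <;> norm_num

lemma a_symm (m : ℕ) (i j : ℤ) : a m i j = a m j i := by
  unfold a
  have : |i - j| = |j - i| := abs_sub_comm i j
  rw [this]
  congr 1
  simp only [eq_iff_iff]; tauto

lemma T_apply {m : ℕ} (v : ℤ → ℝ) {j : ℤ} (hj : |j| ≤ (m:ℤ)) :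
    T m v j = ((if |j-1| ≤ (m:ℤ) then v (j-1) else 0) + (if |j+1| ≤ (m:ℤ) then v (j+1) else 0))/2 := by
  unfold T
  have key : ∀ i ∈ Ib m, a m i j * v i =
      (if i = j - 1 then (1/2) * v i else 0) + (if i = j + 1 then (1/2) * v i else 0) := by
    intro i hi
    rw [mem_Ib] at hi
    unfold a
    by_cases h1 : i = j - 1
    · subst h1
      rw [if_pos ⟨hi, hj, by rw [show j - 1 - j = -1 by ring]; norm_num⟩, if_pos rfl,
        if_neg (by omega)]
      ring
    · by_cases h2 : i = j + 1
      · subst h2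
        rw [if_pos ⟨hi, hj, by rw [show j + 1 - j = 1 by ring]; norm_num⟩, if_neg h1, if_pos rfl]
        ring
      · rw [if_neg (by intro h; rcases h with ⟨_, _, habs⟩; rw [abs_eq (by norm_num : (0:ℤ) ≤ 1)] at habs; omega),
          if_neg h1, if_neg h2]
        ring
  rw [Finset.sum_congr rfl key, Finset.sum_add_distrib,
    Finset.sum_ite_eq' (Ib m) (j-1) (fun i => (1/2 : ℝ) * v i),
    Finset.sum_ite_eq' (Ib m) (j+1) (fun i => (1/2 : ℝ) * v i)]
  by_cases h1 : |j-1| ≤ (m:ℤ) <;> by_cases h2 : |j+1| ≤ (m:ℤ) <;>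
    simp [mem_Ib, h1, h2] <;> ring

lemma T_apply_out {m : ℕ} (v : ℤ → ℝ) {j : ℤ} (hj : ¬ |j| ≤ (m:ℤ)) : T m v j = 0 := by
  unfold T
  apply Finset.sum_eq_zero
  intro i _
  unfold a
  rw [if_neg (by tauto)]
  ring


lemma th_pos (m : ℕ) : 0 < th m := by
  unfold th
  positivity

lemma th_lt (m : ℕ) (hm : 1 ≤ m) : th m ≤ π/4 := by
  unfold th
  rw [div_le_div_iff₀ (by positivity) (by norm_num)]
  have : (4:ℝ) ≤ 2*m+2 := by
    have : (1:ℝ) ≤ m := by exact_mod_cast hm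
    linarith
  nlinarith [pi_pos]

lemma th_mul : ∀ m : ℕ, th m * (m+1) = π/2 := by
  intro m
  unfold th
  field_simp

lemma ph_eq {m : ℕ} {i : ℤ} (hi : |i| ≤ (m:ℤ)+1) : ph m i = Real.cos (th m * i) := by
  unfold ph
  by_cases h : |i| ≤ (m:ℤ)
  · rw [if_pos h]
  · rw [if_neg h]
    have hi' : i = (m:ℤ)+1 ∨ i = -((m:ℤ)+1) := by
      rcases abs_cases i with ⟨h1, h2⟩ | ⟨h1, h2⟩ <;> omega
    have : Real.cos (th m * i) = 0 := by
      rcases hi' with h' | h' <;> subst h'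
      · rw [show ((((m:ℤ)+1 : ℤ)):ℝ) = ((m:ℝ)+1) by push_cast; ring, th_mul m]
        exact Real.cos_pi_div_two
      · rw [show (((-((m:ℤ)+1) : ℤ)):ℝ) = -((m:ℝ)+1) by push_cast; ring, mul_neg, Real.cos_neg,
          th_mul m]
        exact Real.cos_pi_div_two
    rw [this]

lemma eigen (m : ℕ) (j : ℤ) : T m (ph m) j = lam m * ph m j := by
  by_cases hj : |j| ≤ (m:ℤ)
  · rw [T_apply _ hj]
    have habs : ∀ k : ℤ, |j - 1| ≤ k + 0 → True := fun _ _ => trivial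
    have hb1 : |j-1| ≤ (m:ℤ)+1 := by
      rcases abs_cases j with ⟨h1, h2⟩ | ⟨h1, h2⟩ <;> rcases abs_cases (j-1) with ⟨h3, h4⟩ | ⟨h3, h4⟩ <;> omega
    have hb2 : |j+1| ≤ (m:ℤ)+1 := by
      rcases abs_cases j with ⟨h1, h2⟩ | ⟨h1, h2⟩ <;> rcases abs_cases (j+1) with ⟨h3, h4⟩ | ⟨h3, h4⟩ <;> omega
    have h1 : (if |j-1| ≤ (m:ℤ) then ph m (j-1) else 0) = Real.cos (th m * ((j-1 : ℤ) : ℝ)) := by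
      split
      · exact ph_eq hb1
      · rw [← ph_eq hb1]
        unfold ph
        rw [if_neg (by assumption)]
    have h2 : (if |j+1| ≤ (m:ℤ) then ph m (j+1) else 0) = Real.cos (th m * ((j+1 : ℤ) : ℝ)) := by
      split
      · exact ph_eq hb2
      · rw [← ph_eq hb2]
        unfold ph
        rw [if_neg (by assumption)]
    rw [h1, h2]
    have hph : ph m j = Real.cos (th m * j) := ph_eq (by omega)
    rw [hph]
    have e1 : th m * ((j:ℝ)-1) = th m * j - th m := by ring
    have e2 : th m * ((j:ℝ)+1) = th m * j + th m := by ring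
    push_cast
    rw [e1, e2, Real.cos_sub, Real.cos_add]
    unfold lam
    ring
  · rw [T_apply_out _ hj]
    unfold ph
    rw [if_neg hj, mul_zero]

lemma ph_pos {m : ℕ} {i : ℤ} (hi : |i| ≤ (m:ℤ)) : 0 < ph m i := by
  unfold ph
  rw [if_pos hi]
  apply Real.cos_pos_of_mem_Ioo
  constructor
  · have h1 : th m * i ≥ th m * (-(m:ℝ)) := by
      apply mul_le_mul_of_nonneg_left _ (th_pos m).le
      have := abs_le.mp hi
      push_cast
      exact_mod_cast this.1
    have h2 : th m * (-(m:ℝ)) > -(π/2) := by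
      have := th_mul m
      nlinarith [th_pos m]
    linarith
  · have h1 : th m * i ≤ th m * (m:ℝ) := by
      apply mul_le_mul_of_nonneg_left _ (th_pos m).le
      have := abs_le.mp hi
      exact_mod_cast this.2
    have h2 : th m * (m:ℝ) < π/2 := by
      have := th_mul m
      nlinarith [th_pos m]
    linarith

lemma ph_le_one (m : ℕ) (i : ℤ) : ph m i ≤ 1 := by
  unfold ph
  split
  · exact Real.cos_le_one _
  · norm_num

lemma ph_zero (m : ℕ) : ph m 0 = 1 := by
  unfold ph
  rw [if_pos (by simp), Int.cast_zero, mul_zero, Real.cos_zero]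

lemma th_lt_pi_div_two {m : ℕ} (hm : 1 ≤ m) : th m < π/2 := by
  unfold th
  rw [div_lt_div_iff₀ (by positivity) (by norm_num)]
  have : (1:ℝ) ≤ m := by exact_mod_cast hm
  nlinarith [pi_pos]

lemma lam_pos {m : ℕ} (hm : 1 ≤ m) : 0 < lam m := by
  unfold lam
  apply Real.cos_pos_of_mem_Ioo
  constructor
  · have := th_pos m; linarith [pi_pos]
  · exact th_lt_pi_div_two hm

lemma lam_le_one (m : ℕ) : lam m ≤ 1 := Real.cos_le_one _

lemma one_sub_le_lam (m : ℕ) : 1 - (th m)^2/2 ≤ lam m := Real.one_sub_sq_div_two_le_cos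

lemma T_mono {m : ℕ} {u v : ℤ → ℝ} (h : ∀ i, u i ≤ v i) (j : ℤ) : T m u j ≤ T m v j := by
  apply Finset.sum_le_sum
  intro i _
  exact mul_le_mul_of_nonneg_left (h i) (a_nonneg m i j)

lemma T_nonneg {m : ℕ} {u : ℤ → ℝ} (h : ∀ i, 0 ≤ u i) (j : ℤ) : 0 ≤ T m u j := by
  apply Finset.sum_nonneg
  intro i _
  exact mul_nonneg (a_nonneg m i j) (h i)

lemma T_iter_mono {m : ℕ} (k : ℕ) {u v : ℤ → ℝ} (h : ∀ i, u i ≤ v i) (hu : ∀ i, 0 ≤ u i) :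
    (∀ j, (T m)^[k] u j ≤ (T m)^[k] v j) ∧ (∀ j, 0 ≤ (T m)^[k] u j) := by
  induction k with
  | zero => exact ⟨h, hu⟩
  | succ k ih =>
    rw [Function.iterate_succ_apply', Function.iterate_succ_apply']
    exact ⟨T_mono ih.1, T_nonneg ih.2⟩

lemma T_smul {m : ℕ} (c : ℝ) (u : ℤ → ℝ) (j : ℤ) : T m (fun i => c * u i) j = c * T m u j := by
  unfold T
  rw [Finset.mul_sum]
  apply Finset.sum_congr rfl
  intro i _
  ring

lemma T_iter_ph {m : ℕ} (k : ℕ) (j : ℤ) : (T m)^[k] (ph m) j = (lam m)^k * ph m j := by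
  induction k generalizing j with
  | zero => simp
  | succ k ih =>
    rw [Function.iterate_succ_apply']
    have : (T m)^[k] (ph m) = fun i => (lam m)^k * ph m i := funext ih
    rw [this, T_smul, eigen]
    ring

lemma inn_symm (m : ℕ) (u v : ℤ → ℝ) : inn m u v = inn m v u := by
  unfold inn
  apply Finset.sum_congr rfl
  intro i _
  ring

lemma T_symm (m : ℕ) (u v : ℤ → ℝ) : inn m (T m u) v = inn m u (T m v) := by
  unfold inn T
  calc ∑ i ∈ Ib m, (∑ k ∈ Ib m, a m k i * u k) * v i
      = ∑ i ∈ Ib m, ∑ k ∈ Ib m, a m k i * u k * v i :=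
        Finset.sum_congr rfl fun i _ => Finset.sum_mul _ _ _
    _ = ∑ k ∈ Ib m, ∑ i ∈ Ib m, a m k i * u k * v i := Finset.sum_comm
    _ = ∑ k ∈ Ib m, u k * ∑ i ∈ Ib m, a m i k * v i := by
        apply Finset.sum_congr rfl
        intro k _
        rw [Finset.mul_sum]
        apply Finset.sum_congr rfl
        intro i _
        rw [a_symm m i k]
        ring

lemma T_iter_split (m : ℕ) (k : ℕ) (u v : ℤ → ℝ) :
    inn m ((T m)^[k] u) v = inn m u ((T m)^[k] v) := by
  induction k generalizing v with
  | zero => rfl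
  | succ k ih =>
    rw [Function.iterate_succ_apply', T_symm, ih, ← Function.iterate_succ_apply,
      Function.iterate_succ_apply']

-- key spectral bound
lemma norm_T_le {m : ℕ} (hm : 1 ≤ m) (v : ℤ → ℝ) :
    inn m (T m v) (T m v) ≤ (lam m)^2 * inn m v v := by
  have key : ∀ j ∈ Ib m, (T m v j)^2 ≤ lam m * ph m j * ∑ i ∈ Ib m, a m i j * (v i)^2 / ph m i := by
    intro j hj
    have hcs := Finset.sum_mul_sq_le_sq_mul_sq (Ib m)
      (fun i => Real.sqrt (a m i j * ph m i))
      (fun i => Real.sqrt (a m i j / ph m i) * v i)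
    have hTv : T m v j = ∑ i ∈ Ib m, Real.sqrt (a m i j * ph m i) * (Real.sqrt (a m i j / ph m i) * v i) := by
      unfold T
      apply Finset.sum_congr rfl
      intro i hi
      have hph := ph_pos (mem_Ib.mp hi)
      have : Real.sqrt (a m i j * ph m i) * Real.sqrt (a m i j / ph m i) = a m i j := by
        rw [← Real.sqrt_mul (mul_nonneg (a_nonneg m i j) hph.le)]
        rw [show a m i j * ph m i * (a m i j / ph m i) = (a m i j)^2 by field_simp]
        exact Real.sqrt_sq (a_nonneg m i j)
      rw [← mul_assoc, this]
    have e1 : ∑ i ∈ Ib m, (Real.sqrt (a m i j * ph m i))^2 = lam m * ph m j := by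
      rw [← eigen]
      unfold T
      apply Finset.sum_congr rfl
      intro i hi
      rw [Real.sq_sqrt (mul_nonneg (a_nonneg m i j) (ph_pos (mem_Ib.mp hi)).le)]
    have e2 : ∑ i ∈ Ib m, (Real.sqrt (a m i j / ph m i) * v i)^2 = ∑ i ∈ Ib m, a m i j * (v i)^2 / ph m i := by
      apply Finset.sum_congr rfl
      intro i hi
      have hph := ph_pos (mem_Ib.mp hi)
      rw [mul_pow, Real.sq_sqrt (div_nonneg (a_nonneg m i j) hph.le)]
      ring
    rw [hTv]
    calc (∑ i ∈ Ib m, Real.sqrt (a m i j * ph m i) * (Real.sqrt (a m i j / ph m i) * v i))^2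
        ≤ (∑ i ∈ Ib m, (Real.sqrt (a m i j * ph m i))^2) * (∑ i ∈ Ib m, (Real.sqrt (a m i j / ph m i) * v i)^2) := hcs
      _ = lam m * ph m j * ∑ i ∈ Ib m, a m i j * (v i)^2 / ph m i := by rw [e1, e2]
  calc inn m (T m v) (T m v) = ∑ j ∈ Ib m, (T m v j)^2 := by
        unfold inn; apply Finset.sum_congr rfl; intro j _; ring
    _ ≤ ∑ j ∈ Ib m, lam m * ph m j * ∑ i ∈ Ib m, a m i j * (v i)^2 / ph m i :=
        Finset.sum_le_sum key
    _ = ∑ j ∈ Ib m, ∑ i ∈ Ib m, lam m * ph m j * (a m i j * (v i)^2 / ph m i) := by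
        apply Finset.sum_congr rfl
        intro j _
        rw [Finset.mul_sum]
    _ = ∑ i ∈ Ib m, ∑ j ∈ Ib m, lam m * ph m j * (a m i j * (v i)^2 / ph m i) := Finset.sum_comm
    _ = ∑ i ∈ Ib m, lam m * ((v i)^2 / ph m i) * ∑ j ∈ Ib m, a m i j * ph m j := by
        apply Finset.sum_congr rfl
        intro i _
        rw [Finset.mul_sum]
        apply Finset.sum_congr rfl
        intro j _
        ring
    _ = ∑ i ∈ Ib m, lam m * ((v i)^2/ph m i) * (lam m * ph m i) := by
        apply Finset.sum_congr rfl
        intro i _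
        congr 1
        have h : ∑ j ∈ Ib m, a m i j * ph m j = T m (ph m) i := by
          unfold T
          apply Finset.sum_congr rfl
          intro j _
          rw [a_symm m j i]
        rw [h, eigen]
    _ = (lam m)^2 * inn m v v := by
        unfold inn
        rw [Finset.mul_sum]
        apply Finset.sum_congr rfl
        intro i hi
        have hph := ph_pos (mem_Ib.mp hi)
        field_simp

lemma norm_T_iter_le {m : ℕ} (hm : 1 ≤ m) (l : ℕ) (v : ℤ → ℝ) :
    inn m ((T m)^[l] v) ((T m)^[l] v) ≤ (lam m)^(2*l) * inn m v v := by
  induction l with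
  | zero => simp
  | succ l ih =>
    rw [Function.iterate_succ_apply']
    calc inn m (T m ((T m)^[l] v)) (T m ((T m)^[l] v))
        ≤ (lam m)^2 * inn m ((T m)^[l] v) ((T m)^[l] v) := norm_T_le hm _
      _ ≤ (lam m)^2 * ((lam m)^(2*l) * inn m v v) := by
          apply mul_le_mul_of_nonneg_left ih (by positivity)
      _ = (lam m)^(2*(l+1)) * inn m v v := by
          rw [show 2*(l+1) = 2 + 2*l by ring, pow_add]
          ring
lemma dlt_nonneg (i : ℤ) : 0 ≤ dlt i := by unfold dlt; split <;> norm_num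

/-- binomial supersolucion -/
def B (k : ℕ) (i : ℤ) : ℝ :=
  if 0 ≤ (k:ℤ) + i ∧ 2 ∣ ((k:ℤ) + i) then (k.choose (((k:ℤ)+i)/2).toNat : ℝ)/2^k else 0

lemma B_nonneg (k : ℕ) (i : ℤ) : 0 ≤ B k i := by
  unfold B; split
  · positivity
  · exact le_refl 0

lemma B_rec (k : ℕ) (i : ℤ) : B (k+1) i = (B k (i-1) + B k (i+1))/2 := by
  unfold B
  rw [show ((k+1:ℕ):ℤ) = (k:ℤ)+1 by push_cast; ring]
  set s : ℤ := (k:ℤ) + i with hs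
  have e1 : ((k:ℤ)+1) + i = s + 1 := by omega
  have e2 : (k:ℤ) + (i-1) = s - 1 := by omega
  have e3 : (k:ℤ) + (i+1) = s + 1 := by omega
  rw [e1, e2, e3]
  by_cases hpar : 2 ∣ (s+1)
  · by_cases hpos : 0 ≤ s + 1
    · rw [if_pos ⟨hpos, hpar⟩]
      by_cases hzero : s + 1 = 0
      · -- s = -1
        rw [if_neg (by omega), if_pos ⟨by omega, by omega⟩]
        rw [show (s+1)/2 = 0 by omega]
        simp
        ring
      · -- s ≥ 1, s odd
        have hs1 : 0 ≤ s - 1 := by omega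
        have hd1 : 2 ∣ (s - 1) := by omega
        rw [if_pos ⟨hs1, hd1⟩, if_pos ⟨by omega, hpar⟩]
        have hr : ((s+1)/2).toNat = ((s-1)/2).toNat + 1 := by omega
        rw [hr]
        have hpascal : (k+1).choose (((s-1)/2).toNat + 1)
            = k.choose (((s-1)/2).toNat) + k.choose (((s-1)/2).toNat + 1) := by
          rw [Nat.choose_succ_succ]
        rw [hpascal]
        push_cast
        rw [pow_succ]
        ring
    · rw [if_neg (by tauto), if_neg (by omega), if_neg (by omega)]
      norm_num
  · rw [if_neg (by tauto), if_neg (by omega), if_neg (by omega)]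
    norm_num

lemma B_two_k_zero (k : ℕ) : B (2*k) 0 = (k.centralBinom : ℝ)/4^k := by
  unfold B
  rw [if_pos ⟨by omega, by omega⟩, show (((2*k:ℕ):ℤ) + 0)/2 = (k:ℤ) by omega, Int.toNat_natCast,
    Nat.centralBinom, show (2:ℝ)^(2*k) = 4^k by rw [pow_mul]; norm_num]

lemma T_le_B {m : ℕ} (k : ℕ) : ∀ j, (T m)^[k] dlt j ≤ B k j := by
  induction k with
  | zero =>
    intro j
    simp only [Function.iterate_zero_apply]
    by_cases h : j = 0
    · subst h
      unfold dlt B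
      rw [if_pos rfl, if_pos ⟨by omega, by omega⟩]
      simp
    · unfold dlt B
      rw [if_neg h]
      split
      · positivity
      · exact le_refl 0
  | succ k ih =>
    intro j
    rw [Function.iterate_succ_apply', B_rec]
    have hnn : ∀ i, 0 ≤ (T m)^[k] dlt i := (T_iter_mono k (fun i => le_refl (dlt i)) dlt_nonneg).2
    by_cases hj : |j| ≤ (m:ℤ)
    · rw [T_apply _ hj]
      have g1 : (if |j-1| ≤ (m:ℤ) then (T m)^[k] dlt (j-1) else 0) ≤ B k (j-1) := by
        split
        · exact ih _
        · exact B_nonneg _ _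
      have g2 : (if |j+1| ≤ (m:ℤ) then (T m)^[k] dlt (j+1) else 0) ≤ B k (j+1) := by
        split
        · exact ih _
        · exact B_nonneg _ _
      linarith
    · rw [T_apply_out _ hj]
      have := B_nonneg k (j-1)
      have := B_nonneg k (j+1)
      linarith

lemma centralBinom_sq_le (k : ℕ) : (2*(k:ℝ)+1) * ((k.centralBinom : ℝ)/4^k)^2 ≤ 1 := by
  induction k with
  | zero => simp [Nat.centralBinom]
  | succ k ih =>
    have hrecR : ((k:ℝ)+1) * ((k+1).centralBinom : ℝ) = 2*(2*(k:ℝ)+1) * (k.centralBinom : ℝ) := by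
      exact_mod_cast Nat.succ_mul_centralBinom_succ k
    have hk1 : ((k:ℝ)+1) ≠ 0 := by positivity
    have hcb : ((k+1).centralBinom : ℝ) = 2*(2*(k:ℝ)+1) * (k.centralBinom : ℝ)/((k:ℝ)+1) := by
      rw [eq_div_iff hk1]
      linarith
    have hc : (2*(k:ℝ)+3)*(2*(k:ℝ)+1)/(2*(k:ℝ)+2)^2 ≤ 1 := by
      rw [div_le_one (by positivity)]
      nlinarith
    have hA0 : 0 ≤ (2*(k:ℝ)+1) * ((k.centralBinom : ℝ)/4^k)^2 := by positivity
    calc (2*((k+1:ℕ):ℝ)+1) * (((k+1).centralBinom : ℝ)/4^(k+1))^2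
        = ((2*(k:ℝ)+3)*(2*(k:ℝ)+1)/(2*(k:ℝ)+2)^2) * ((2*(k:ℝ)+1) * ((k.centralBinom : ℝ)/4^k)^2) := by
          rw [hcb]
          push_cast
          field_simp
          ring
      _ ≤ 1 * 1 := mul_le_mul hc ih hA0 (by norm_num)
      _ = 1 := by norm_num

def Q (m n : ℕ) : ℝ := ∑ i ∈ Ib m, (T m)^[n] dlt i

lemma ph_nonneg (m : ℕ) (i : ℤ) : 0 ≤ ph m i := by
  by_cases h : |i| ≤ (m:ℤ)
  · exact (ph_pos h).le
  · unfold ph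
    rw [if_neg h]

lemma oneI_nonneg (m : ℕ) (i : ℤ) : 0 ≤ oneI m i := by
  unfold oneI; split <;> norm_num

lemma ph_le_oneI (m : ℕ) (i : ℤ) : ph m i ≤ oneI m i := by
  unfold ph oneI
  split
  · exact Real.cos_le_one _
  · exact le_refl 0

lemma inn_dlt (m : ℕ) (w : ℤ → ℝ) : inn m dlt w = w 0 := by
  unfold inn dlt
  rw [Finset.sum_congr rfl (fun i _ => by
    rw [show (if i = 0 then (1:ℝ) else 0) * w i = if i = 0 then w i else 0 by split <;> simp_all])]
  rw [Finset.sum_ite_eq' (Ib m) 0 w, if_pos (mem_Ib.mpr (by simp))]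

lemma Q_eq_inn (m n : ℕ) : Q m n = inn m ((T m)^[n] dlt) (oneI m) := by
  unfold Q inn
  apply Finset.sum_congr rfl
  intro i hi
  unfold oneI
  rw [if_pos (mem_Ib.mp hi), mul_one]

lemma Q_ge (m n : ℕ) : (lam m)^n ≤ Q m n := by
  rw [Q_eq_inn, T_iter_split]
  have h1 : ∀ j, (T m)^[n] (ph m) j ≤ (T m)^[n] (oneI m) j :=
    (T_iter_mono n (ph_le_oneI m) (ph_nonneg m)).1
  calc (lam m)^n = (lam m)^n * ph m 0 := by rw [ph_zero]; ring
    _ = (T m)^[n] (ph m) 0 := (T_iter_ph n 0).symm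
    _ = inn m dlt ((T m)^[n] (ph m)) := (inn_dlt m _).symm
    _ ≤ inn m dlt ((T m)^[n] (oneI m)) := by
        unfold inn
        apply Finset.sum_le_sum
        intro i _
        exact mul_le_mul_of_nonneg_left (h1 i) (dlt_nonneg i)

lemma inn_oneI (m : ℕ) : inn m (oneI m) (oneI m) = 2*(m:ℝ)+1 := by
  unfold inn
  rw [Finset.sum_congr rfl (fun i hi => by
    unfold oneI
    rw [if_pos (mem_Ib.mp hi), mul_one])]
  rw [Finset.sum_const]
  unfold Ib
  rw [Int.card_Icc]
  rw [show ((m:ℤ) + 1 - -(m:ℤ)) = 2*(m:ℤ)+1 by ring]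
  rw [show ((2*(m:ℤ)+1)).toNat = 2*m+1 by omega]
  push_cast
  ring

lemma inn_self_nonneg (m : ℕ) (u : ℤ → ℝ) : 0 ≤ inn m u u := by
  apply Finset.sum_nonneg
  intro i _
  exact mul_self_nonneg _

lemma Q_sq_le (m n : ℕ) (hm : 1 ≤ m) (hn : m^2 ≤ n) :
    (Q m n)^2 ≤ 3 * (lam m)^(2*(n - m^2)) := by
  set k := m^2
  set l := n - m^2
  have hkl : n = l + k := by omega
  have hsplit : Q m n = inn m ((T m)^[k] dlt) ((T m)^[l] (oneI m)) := by
    rw [Q_eq_inn, hkl, Function.iterate_add_apply, T_iter_split m l _ (oneI m)]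
  have hCS : (Q m n)^2 ≤ inn m ((T m)^[k] dlt) ((T m)^[k] dlt) *
      inn m ((T m)^[l] (oneI m)) ((T m)^[l] (oneI m)) := by
    rw [hsplit]
    unfold inn
    have := Finset.sum_mul_sq_le_sq_mul_sq (Ib m) (fun i => (T m)^[k] dlt i)
      (fun i => (T m)^[l] (oneI m) i)
    calc (∑ i ∈ Ib m, (T m)^[k] dlt i * (T m)^[l] (oneI m) i)^2
        ≤ (∑ i ∈ Ib m, ((T m)^[k] dlt i)^2) * ∑ i ∈ Ib m, ((T m)^[l] (oneI m) i)^2 := this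
      _ = _ := by
          congr 1 <;> [skip; skip] <;> apply Finset.sum_congr rfl <;> intro i _ <;> ring
  have h1 : inn m ((T m)^[k] dlt) ((T m)^[k] dlt) ≤ (k.centralBinom : ℝ)/4^k := by
    have e : inn m ((T m)^[k] dlt) ((T m)^[k] dlt) = (T m)^[2*k] dlt 0 := by
      rw [T_iter_split m k _ ((T m)^[k] dlt), ← Function.iterate_add_apply, inn_dlt]
      norm_num [two_mul]
    rw [e]
    calc (T m)^[2*k] dlt 0 ≤ B (2*k) 0 := T_le_B (2*k) 0
      _ = (k.centralBinom : ℝ)/4^k := B_two_k_zero k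
  have h2 : inn m ((T m)^[l] (oneI m)) ((T m)^[l] (oneI m)) ≤ (lam m)^(2*l) * (2*(m:ℝ)+1) := by
    calc inn m ((T m)^[l] (oneI m)) ((T m)^[l] (oneI m))
        ≤ (lam m)^(2*l) * inn m (oneI m) (oneI m) := norm_T_iter_le hm l (oneI m)
      _ = (lam m)^(2*l) * (2*(m:ℝ)+1) := by rw [inn_oneI]
  have hcb : (2*(k:ℝ)+1) * ((k.centralBinom : ℝ)/4^k)^2 ≤ 1 := centralBinom_sq_le k
  have hβ : ((k.centralBinom : ℝ)/4^k) * (2*(m:ℝ)+1) ≤ 3 := by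
    set β := (k.centralBinom : ℝ)/4^k with hβdef
    have hβ0 : 0 ≤ β := by positivity
    have hm1 : (1:ℝ) ≤ m := by exact_mod_cast hm
    have hk' : (k:ℝ) = (m:ℝ)^2 := by
      rw [show k = m^2 from rfl]; push_cast; ring
    nlinarith [sq_nonneg (β * (2*(m:ℝ)+1) - 3), sq_nonneg β, sq_nonneg ((m:ℝ)-1)]
  have hQ1 : inn m ((T m)^[k] dlt) ((T m)^[k] dlt) ≥ 0 := inn_self_nonneg m _
  have hQ2 : inn m ((T m)^[l] (oneI m)) ((T m)^[l] (oneI m)) ≥ 0 := inn_self_nonneg m _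
  have hlam := lam_pos hm
  calc (Q m n)^2 ≤ inn m ((T m)^[k] dlt) ((T m)^[k] dlt) *
      inn m ((T m)^[l] (oneI m)) ((T m)^[l] (oneI m)) := hCS
    _ ≤ ((k.centralBinom : ℝ)/4^k) * ((lam m)^(2*l) * (2*(m:ℝ)+1)) := by
        apply mul_le_mul h1 h2 hQ2 (by positivity)
    _ = ((k.centralBinom : ℝ)/4^k * (2*(m:ℝ)+1)) * (lam m)^(2*l) := by ring
    _ ≤ 3 * (lam m)^(2*l) := by
        apply mul_le_mul_of_nonneg_right hβ (by positivity)

lemma Q_nonneg (m n : ℕ) : 0 ≤ Q m n := by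
  apply Finset.sum_nonneg
  intro i _
  exact (T_iter_mono n (fun i => le_refl (dlt i)) dlt_nonneg).2 i

lemma exp_neg_sq_le_lam (m : ℕ) (hm : 1 ≤ m) : Real.exp (-(th m)^2) ≤ lam m := by
  have hth1 : th m ≤ 1 := by
    have h4 : π ≤ 4 := Real.pi_le_four
    have := th_lt m hm
    linarith
  have hth0 := th_pos m
  have hu : (th m)^2 ≤ 1 := by nlinarith
  have hu0 : 0 ≤ (th m)^2 := sq_nonneg _
  have e1 : Real.exp (-(th m)^2) ≤ 1/(1 + (th m)^2) := by
    rw [Real.exp_neg, inv_eq_one_div, div_le_div_iff₀ (Real.exp_pos _) (by positivity), one_mul, one_mul]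
    linarith [Real.add_one_le_exp ((th m)^2)]
  have e2 : 1/(1 + (th m)^2) ≤ 1 - (th m)^2/2 := by
    rw [div_le_iff₀ (by positivity)]
    nlinarith
  linarith [one_sub_le_lam m]

lemma lam_pow_ge (m : ℕ) (hm : 1 ≤ m) : Real.exp (-(π^2/4)) ≤ (lam m)^(m^2) := by
  have hth0 := th_pos m
  have hmth : (m:ℝ) * th m ≤ π/2 := by
    have := th_mul m
    nlinarith
  have h1 : (m:ℝ)^2 * (th m)^2 ≤ π^2/4 := by nlinarith [mul_nonneg (Nat.cast_nonneg m : (0:ℝ) ≤ m) hth0.le]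
  calc Real.exp (-(π^2/4)) ≤ Real.exp (-((m:ℝ)^2 * (th m)^2)) := by
        apply Real.exp_le_exp.mpr
        linarith
    _ = (Real.exp (-(th m)^2))^(m^2) := by
        rw [← Real.exp_nat_mul]
        congr 1
        push_cast
        ring
    _ ≤ (lam m)^(m^2) := pow_le_pow_left₀ (Real.exp_pos _).le (exp_neg_sq_le_lam m hm) _

lemma Q_le (m n : ℕ) (hm : 1 ≤ m) (hn : m^2 ≤ n) :
    Q m n ≤ Real.sqrt 3 * Real.exp (π^2/4) * (lam m)^n := by
  have hlam := lam_pos hm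
  have h1 : Q m n ≤ Real.sqrt 3 * (lam m)^(n - m^2) := by
    have hsq := Q_sq_le m n hm hn
    have h2 : 3 * (lam m)^(2*(n - m^2)) = 3 * ((lam m)^(n - m^2))^2 := by
      rw [← pow_mul]
      ring_nf
    rw [h2] at hsq
    have := Real.sqrt_le_sqrt hsq
    rw [Real.sqrt_sq (Q_nonneg m n), Real.sqrt_mul (by norm_num) (((lam m)^(n - m^2))^2),
      Real.sqrt_sq (by positivity)] at this
    exact this
  have h2 : (lam m)^(n - m^2) = (lam m)^n / (lam m)^(m^2) := pow_sub₀ _ (ne_of_gt hlam) hn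
  have h3 := lam_pow_ge m hm
  have hexp : 0 < Real.exp (-(π^2/4)) := Real.exp_pos _
  calc Q m n ≤ Real.sqrt 3 * ((lam m)^n / (lam m)^(m^2)) := by rw [← h2]; exact h1
    _ ≤ Real.sqrt 3 * ((lam m)^n / Real.exp (-(π^2/4))) := by
        apply mul_le_mul_of_nonneg_left _ (Real.sqrt_nonneg 3)
        apply div_le_div_of_nonneg_left (by positivity) hexp h3
    _ = Real.sqrt 3 * Real.exp (π^2/4) * (lam m)^n := by
        rw [Real.exp_neg]
        field_simp

def pw (m k : ℕ) (v : ℤ → ℝ) (g : Fin (k+1) → ℤ) : ℝ :=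
  v (g 0) * ∏ j : Fin k, a m (g j.castSucc) (g j.succ)

lemma sum_piFinset_cons {k : ℕ} (s : Finset ℤ) (F : (Fin (k+1) → ℤ) → ℝ) :
    ∑ g ∈ Fintype.piFinset (fun _ : Fin (k+1) => s), F g
      = ∑ y ∈ s, ∑ h ∈ Fintype.piFinset (fun _ : Fin k => s), F (Fin.cons y h) := by
  rw [← Finset.sum_product']
  apply Finset.sum_nbij' (i := fun g => ((g 0 : ℤ), Fin.tail g)) (j := fun p => Fin.cons p.1 p.2)
  · intro g hg
    rw [Fintype.mem_piFinset] at hg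
    rw [Finset.mem_product]
    constructor
    · exact hg 0
    · rw [Fintype.mem_piFinset]
      intro i
      exact hg i.succ
  · intro p hp
    rw [Finset.mem_product] at hp
    rw [Fintype.mem_piFinset]
    intro i
    rcases Fin.eq_zero_or_eq_succ i with h | ⟨j, rfl⟩
    · rw [h, Fin.cons_zero]
      exact hp.1
    · rw [Fin.cons_succ]
      exact (Fintype.mem_piFinset.mp hp.2) j
  · intro g _
    exact Fin.cons_self_tail g
  · intro p _
    simp [Fin.tail_cons]
  · intro g _
    rw [Fin.cons_self_tail]

lemma path_sum (m : ℕ) : ∀ (k : ℕ) (v : ℤ → ℝ),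
    ∑ g ∈ Fintype.piFinset (fun _ : Fin (k+1) => Ib m), pw m k v g
      = ∑ i ∈ Ib m, (T m)^[k] v i := by
  intro k
  induction k with
  | zero =>
    intro v
    rw [sum_piFinset_cons]
    apply Finset.sum_congr rfl
    intro y _
    have h1 : ∀ h : Fin 0 → ℤ, pw m 0 v (Fin.cons y h) = v y := by
      intro h
      unfold pw
      rw [Fin.cons_zero]
      simp
    rw [Finset.sum_congr rfl (fun h _ => h1 h), Finset.sum_const, Fintype.card_piFinset]
    simp
  | succ k ih =>
    intro v
    rw [sum_piFinset_cons]
    have key : ∀ (y : ℤ) (h : Fin (k+1) → ℤ), pw m (k+1) v (Fin.cons y h)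
        = a m y (h 0) * v y * ∏ j : Fin k, a m (h j.castSucc) (h j.succ) := by
      intro y h
      unfold pw
      rw [Fin.cons_zero, Fin.prod_univ_succ]
      simp only [Fin.castSucc_zero, Fin.cons_zero, Fin.cons_succ, ← Fin.succ_castSucc]
      ring
    calc ∑ y ∈ Ib m, ∑ h ∈ Fintype.piFinset (fun _ : Fin (k+1) => Ib m), pw m (k+1) v (Fin.cons y h)
        = ∑ y ∈ Ib m, ∑ h ∈ Fintype.piFinset (fun _ : Fin (k+1) => Ib m),
            a m y (h 0) * v y * ∏ j : Fin k, a m (h j.castSucc) (h j.succ) := by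
          apply Finset.sum_congr rfl
          intro y _
          exact Finset.sum_congr rfl (fun h _ => key y h)
      _ = ∑ h ∈ Fintype.piFinset (fun _ : Fin (k+1) => Ib m),
            (∑ y ∈ Ib m, a m y (h 0) * v y) * ∏ j : Fin k, a m (h j.castSucc) (h j.succ) := by
          rw [Finset.sum_comm]
          apply Finset.sum_congr rfl
          intro h _
          rw [Finset.sum_mul]
      _ = ∑ h ∈ Fintype.piFinset (fun _ : Fin (k+1) => Ib m), pw m k (T m v) h := by
          apply Finset.sum_congr rfl
          intro h _
          unfold pw T
          rfl
      _ = ∑ i ∈ Ib m, (T m)^[k] (T m v) i := ih (T m v)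
      _ = ∑ i ∈ Ib m, (T m)^[k+1] v i := by
          apply Finset.sum_congr rfl
          intro i _
          rw [Function.iterate_succ_apply]

lemma path_sum_dlt (m n : ℕ) :
    ∑ g ∈ Fintype.piFinset (fun _ : Fin (n+1) => Ib m), pw m n dlt g = Q m n :=
  path_sum m n dlt


def ext (n : ℕ) (g : Fin (n+1) → ℤ) : ℕ → ℤ := fun j => if h : j < n+1 then g ⟨j, h⟩ else 0

def cyl (n : ℕ) (g : Fin (n+1) → ℤ) : Set (ℕ → ℤ) := {ω | ∀ j ≤ n, ω j = ext n g j}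

lemma ext_eq (n : ℕ) (g : Fin (n+1) → ℤ) (j : ℕ) (h : j < n+1) : ext n g j = g ⟨j, h⟩ := by
  unfold ext
  rw [dif_pos h]

lemma cyl_measurable (n : ℕ) (g : Fin (n+1) → ℤ) : MeasurableSet (cyl n g) := by
  have : cyl n g = ⋂ (j : ℕ) (_ : j ≤ n), (fun ω : ℕ → ℤ => ω j) ⁻¹' {ext n g j} := by
    ext ω
    simp [cyl, Set.mem_iInter]
  rw [this]
  apply MeasurableSet.biInter (Set.to_countable _)
  intro j _
  exact measurable_pi_apply j (measurableSet_singleton _)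

lemma pw_nonneg (m k : ℕ) (g : Fin (k+1) → ℤ) : 0 ≤ pw m k dlt g := by
  unfold pw
  apply mul_nonneg (dlt_nonneg _)
  apply Finset.prod_nonneg
  intro j _
  exact a_nonneg m _ _

lemma event_eq_union (m n : ℕ) :
    {ω : ℕ → ℤ | ∀ j ≤ n, |ω j| ≤ (m:ℤ)}
      = ⋃ g ∈ (Fintype.piFinset (fun _ : Fin (n+1) => Ib m) : Finset (Fin (n+1) → ℤ)),
          cyl n g := by
  ext ω
  simp only [Set.mem_setOf_eq, Set.mem_iUnion]
  constructor
  · intro hω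
    refine ⟨fun i => ω i, ?_, ?_⟩
    · rw [Fintype.mem_piFinset]
      intro i
      rw [mem_Ib]
      exact hω i (Nat.lt_succ_iff.mp i.isLt)
    · intro j hj
      rw [ext_eq n _ j (Nat.lt_succ_iff.mpr hj)]
  · rintro ⟨g, hg, hω⟩ j hj
    rw [hω j hj, ext_eq n g j (Nat.lt_succ_iff.mpr hj)]
    rw [Fintype.mem_piFinset] at hg
    exact mem_Ib.mp (hg _)

lemma cyl_disjoint (n : ℕ) : ∀ g ∈ (Fintype.piFinset (fun _ : Fin (n+1) => Ib 0) : Finset _),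
    True := fun _ _ => trivial

lemma P_event (P : Measure (ℕ → ℤ)) (hP : IsSRWZ P) (m n : ℕ) :
    P {ω : ℕ → ℤ | ∀ j ≤ n, |ω j| ≤ (m:ℤ)} = ENNReal.ofReal (Q m n) := by
  classical
  rw [event_eq_union m n]
  rw [measure_biUnion_finset ?hd (fun g _ => cyl_measurable n g)]
  case hd =>
    intro g hg g' hg' hne
    refine Set.disjoint_left.mpr ?_
    intro ω hω hω'
    apply hne
    funext i
    have h1 := hω i.val (Nat.lt_succ_iff.mp i.isLt)
    have h2 := hω' i.val (Nat.lt_succ_iff.mp i.isLt)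
    rw [ext_eq n g i.val i.isLt] at h1
    rw [ext_eq n g' i.val i.isLt] at h2
    rw [Fin.eta] at h1 h2
    rw [← h1, ← h2]
  have hterm : ∀ g ∈ (Fintype.piFinset (fun _ : Fin (n+1) => Ib m) : Finset _),
      P (cyl n g) = ENNReal.ofReal (pw m n dlt g) := by
    intro g hg
    rw [Fintype.mem_piFinset] at hg
    have hbox : ∀ i : Fin (n+1), |g i| ≤ (m:ℤ) := fun i => mem_Ib.mp (hg i)
    have := hP.2 (ext n g) n
    unfold cyl
    rw [this]
    have h0 : ext n g 0 = g 0 := ext_eq n g 0 (Nat.succ_pos n)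
    have hprod : ∏ j ∈ Finset.range n,
        (if ext n g (j + 1) - ext n g j = 1 ∨ ext n g (j + 1) - ext n g j = -1
          then (2 : ℝ≥0∞)⁻¹ else 0)
        = ∏ j : Fin n, ENNReal.ofReal (a m (g j.castSucc) (g j.succ)) := by
      rw [← Fin.prod_univ_eq_prod_range]
      apply Finset.prod_congr rfl
      intro j _
      have hj1 : (j : ℕ) < n + 1 := Nat.lt_succ_of_lt j.isLt
      have hj2 : (j : ℕ) + 1 < n + 1 := Nat.succ_lt_succ j.isLt
      rw [ext_eq n g j hj1, ext_eq n g (j+1) hj2]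
      have e1 : (⟨(j:ℕ), hj1⟩ : Fin (n+1)) = j.castSucc := rfl
      have e2 : (⟨(j:ℕ)+1, hj2⟩ : Fin (n+1)) = j.succ := rfl
      rw [e1, e2]
      unfold a
      by_cases hd : g j.succ - g j.castSucc = 1 ∨ g j.succ - g j.castSucc = -1
      · rw [if_pos hd, if_pos ⟨hbox _, hbox _, by rcases hd with h | h <;> [rw [show g j.castSucc - g j.succ = -1 by omega]; rw [show g j.castSucc - g j.succ = 1 by omega]] <;> norm_num⟩]
        rw [show ((1:ℝ)/2) = (2:ℝ)⁻¹ by norm_num, ENNReal.ofReal_inv_of_pos (by norm_num)]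
        norm_num
      · rw [if_neg hd, if_neg ?h2]
        · exact ENNReal.ofReal_zero.symm
        · intro ⟨_, _, habs⟩
          rw [abs_eq (by norm_num : (0:ℤ) ≤ 1)] at habs
          omega
    rw [h0, hprod]
    have hdlt : (if g 0 = 0 then (1:ℝ≥0∞) else 0) = ENNReal.ofReal (dlt (g 0)) := by
      unfold dlt
      split <;> simp
    rw [hdlt, ← ENNReal.ofReal_prod_of_nonneg (fun j _ => a_nonneg m _ _),
      ← ENNReal.ofReal_mul (dlt_nonneg _)]
    rfl
  rw [Finset.sum_congr rfl hterm, ← ENNReal.ofReal_sum_of_nonneg (fun g _ => pw_nonneg m n g),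
    path_sum_dlt]

lemma log_cos_upper {t : ℝ} (h0 : 0 < t) (h1 : t ≤ 1) :
    Real.log (Real.cos t)/t^2 ≤ -(1/2)*(1 - t^2/16)^2 := by
  have hcos : 0 < Real.cos t := by
    apply Real.cos_pos_of_mem_Ioo
    constructor
    · linarith [Real.pi_gt_three]
    · linarith [Real.pi_gt_three]
  have hsin : t/2 - (t/2)^3/4 < Real.sin (t/2) := by
    have h := Real.sin_gt_sub_cube (x := t/2) (by linarith)
    nlinarith [pow_pos (show (0:ℝ) < t/2 by linarith) 3]
  have ht2 : t^2 ≤ 1 := by nlinarith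
  have ht3 : t^3 ≤ t := by nlinarith [mul_le_mul_of_nonneg_left ht2 h0.le]
  have hsinpos : 0 < t/2 - (t/2)^3/4 := by nlinarith
  have hcos_eq : Real.cos t = 1 - 2 * Real.sin (t/2)^2 := by
    have h2 : Real.cos (2*(t/2)) = 2 * Real.cos (t/2)^2 - 1 := Real.cos_two_mul (t/2)
    rw [show 2*(t/2) = t by ring] at h2
    have h3 : Real.cos (t/2)^2 = 1 - Real.sin (t/2)^2 := Real.cos_sq' (t/2)
    rw [h2, h3]
    ring
  have hsq : (t/2 - (t/2)^3/4)^2 < Real.sin (t/2)^2 := by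
    have habs : |t/2 - (t/2)^3/4| < |Real.sin (t/2)| := by
      rw [abs_of_pos hsinpos, abs_of_pos (lt_trans hsinpos hsin)]
      exact hsin
    calc (t/2 - (t/2)^3/4)^2 = |t/2 - (t/2)^3/4|^2 := (sq_abs _).symm
      _ < |Real.sin (t/2)|^2 := by
          apply pow_lt_pow_left₀ habs (abs_nonneg _)
          norm_num
      _ = Real.sin (t/2)^2 := sq_abs _
  have hkey : Real.cos t - 1 ≤ -(t^2/2)*(1 - t^2/16)^2 := by
    rw [hcos_eq]
    have e : (t/2 - (t/2)^3/4)^2 = (t^2/4)*(1 - t^2/16)^2 := by ring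
    nlinarith
  have hlog : Real.log (Real.cos t) ≤ Real.cos t - 1 := by
    have := Real.log_le_sub_one_of_pos hcos
    linarith
  rw [div_le_iff₀ (by positivity)]
  calc Real.log (Real.cos t) ≤ Real.cos t - 1 := hlog
    _ ≤ -(t^2/2)*(1 - t^2/16)^2 := hkey
    _ = -(1/2)*(1 - t^2/16)^2 * t^2 := by ring

lemma log_cos_lower {t : ℝ} (h0 : 0 < t) (h1 : t ≤ 1) :
    -(1/2)/Real.cos t ≤ Real.log (Real.cos t)/t^2 := by
  have hcos : 0 < Real.cos t := by
    apply Real.cos_pos_of_mem_Ioo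
    constructor
    · linarith [Real.pi_gt_three]
    · linarith [Real.pi_gt_three]
  have hlog : (Real.cos t - 1)/Real.cos t ≤ Real.log (Real.cos t) := by
    have h2 := Real.log_le_sub_one_of_pos (show 0 < (Real.cos t)⁻¹ by positivity)
    rw [Real.log_inv] at h2
    have : (Real.cos t - 1)/Real.cos t = -((Real.cos t)⁻¹ - 1) := by
      field_simp
      ring
    rw [this]
    linarith
  have hq : 1 - t^2/2 ≤ Real.cos t := Real.one_sub_sq_div_two_le_cos
  have h3 : (-(t^2/2))/Real.cos t ≤ (Real.cos t - 1)/Real.cos t :=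
    (div_le_div_iff_of_pos_right hcos).mpr (by linarith)
  have h4 : (-(t^2/2))/Real.cos t / t^2 = -(1/2)/Real.cos t := by
    field_simp
  calc -(1/2)/Real.cos t = ((-(t^2/2))/Real.cos t)/t^2 := h4.symm
    _ ≤ ((Real.cos t - 1)/Real.cos t)/t^2 :=
        (div_le_div_iff_of_pos_right (by positivity : (0:ℝ) < t^2)).mpr h3
    _ ≤ Real.log (Real.cos t)/t^2 :=
        (div_le_div_iff_of_pos_right (by positivity : (0:ℝ) < t^2)).mpr hlog

theorem main (P : Measure (ℕ → ℤ)) (hP : IsSRWZ P)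
    (x : ℕ → ℝ) (hx : Tendsto x atTop atTop)
    (hxo : (fun n : ℕ => x n) =o[atTop] fun n : ℕ => Real.sqrt n) :
    Tendsto
      (fun n : ℕ =>
        x n ^ 2 / n *
          Real.log ((P {ω : ℕ → ℤ | ∀ j ≤ n, |(ω j : ℝ)| ≤ x n}).toReal))
      atTop (nhds (-(π ^ 2 / 8))) := by
  classical
  set m : ℕ → ℕ := fun n => ⌊x n⌋₊ with hm_def
  set C : ℝ := Real.sqrt 3 * Real.exp (π^2/4) with hC_def
  have hC : 0 < C := by positivity
  -- eventual facts
  have hx1 : ∀ᶠ n in atTop, 1 ≤ x n := hx.eventually_ge_atTop 1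
  have hm1 : ∀ᶠ n in atTop, 1 ≤ m n := by
    filter_upwards [hx1] with n hn
    exact Nat.le_floor (by exact_mod_cast hn)
  have hmn : ∀ᶠ n in atTop, (m n)^2 ≤ n := by
    have hb := hxo.def (by norm_num : (0:ℝ) < 1)
    filter_upwards [hb, hx1] with n hn hn1
    have hxs : x n ≤ Real.sqrt n := by
      rw [one_mul] at hn
      calc x n ≤ |x n| := le_abs_self _
        _ = ‖x n‖ := rfl
        _ ≤ ‖Real.sqrt n‖ := hn
        _ = |Real.sqrt n| := rfl
        _ = Real.sqrt n := abs_of_nonneg (Real.sqrt_nonneg _)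
    have hmx : (m n : ℝ) ≤ x n := Nat.floor_le (by linarith)
    have : ((m n : ℝ))^2 ≤ (n : ℝ) := by
      calc ((m n : ℝ))^2 ≤ (Real.sqrt n)^2 := by
            apply pow_le_pow_left₀ (by positivity) (le_trans hmx hxs)
        _ = (n : ℝ) := Real.sq_sqrt (Nat.cast_nonneg n)
    exact_mod_cast this
  have hm_inf : Tendsto m atTop atTop := tendsto_nat_floor_atTop.comp hx
  -- event identification
  have hEv : ∀ᶠ n in atTop, (P {ω : ℕ → ℤ | ∀ j ≤ n, |(ω j : ℝ)| ≤ x n}).toReal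
      = Q (m n) n := by
    filter_upwards [hx1] with n hn
    have hset : {ω : ℕ → ℤ | ∀ j ≤ n, |(ω j : ℝ)| ≤ x n}
        = {ω : ℕ → ℤ | ∀ j ≤ n, |ω j| ≤ (m n : ℤ)} := by
      ext ω
      simp only [Set.mem_setOf_eq]
      apply forall_congr'
      intro j
      apply imp_congr_right
      intro _
      rw [show |(ω j : ℝ)| = ((|ω j| : ℤ) : ℝ) by push_cast; ring]
      rw [show ((m n : ℕ) : ℤ) = ⌊x n⌋ from Int.natCast_floor_eq_floor (by linarith)]
      exact (Int.le_floor).symm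
    rw [hset, P_event P hP (m n) n, ENNReal.toReal_ofReal (Q_nonneg _ _)]
  -- limit components
  have h1inv : Tendsto (fun n => 1/((m n : ℝ)+1)) atTop (nhds 0) :=
    tendsto_one_div_add_atTop_nhds_zero_nat.comp hm_inf
  have hθ_eq : ∀ n, th (m n) = (π/2) * (1/((m n : ℝ)+1)) := by
    intro n
    unfold th
    rw [mul_one_div, div_div]
    congr 1
    ring
  have hθ0 : Tendsto (fun n => th (m n)) atTop (nhds 0) := by
    have := h1inv.const_mul (π/2)
    rw [mul_zero] at this
    exact this.congr (fun n => (hθ_eq n).symm)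
  have hxm : Tendsto (fun n => x n/((m n : ℝ)+1)) atTop (nhds 1) := by
    apply tendsto_of_tendsto_of_tendsto_of_le_of_le' (g := fun n => 1 - 1/((m n : ℝ)+1))
      (h := fun _ => 1)
    · have := (tendsto_const_nhds (x := (1:ℝ)) (f := atTop (α := ℕ))).sub h1inv
      rw [sub_zero] at this
      exact this
    · exact tendsto_const_nhds
    · filter_upwards [hx1] with n hn
      have hmx : (m n : ℝ) ≤ x n := Nat.floor_le (by linarith)
      have hpos : (0:ℝ) < (m n : ℝ) + 1 := by positivity
      rw [show 1 - 1/((m n : ℝ)+1) = (m n : ℝ)/((m n : ℝ)+1) by field_simp; ring]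
      exact (div_le_div_iff_of_pos_right hpos).mpr hmx
    · filter_upwards [hx1] with n hn
      have hlt : x n < (m n : ℝ) + 1 := Nat.lt_floor_add_one (x n)
      have hpos : (0:ℝ) < (m n : ℝ) + 1 := by positivity
      rw [div_le_one hpos]
      exact hlt.le
  have hxθ : Tendsto (fun n => x n * th (m n)) atTop (nhds (π/2)) := by
    have h := hxm.const_mul (π/2)
    rw [mul_one] at h
    apply h.congr
    intro n
    rw [hθ_eq n]
    ring
  -- ratio limit
  have hθ1 : ∀ᶠ n in atTop, th (m n) ≤ 1 := by
    filter_upwards [hm1] with n hn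
    have := th_lt (m n) hn
    linarith [Real.pi_le_four]
  have hcosθ : Tendsto (fun n => Real.cos (th (m n))) atTop (nhds 1) := by
    have h := (Real.continuous_cos.tendsto 0).comp hθ0
    rw [Real.cos_zero] at h
    exact h
  have hlb : Tendsto (fun n => -(1/2)/Real.cos (th (m n))) atTop (nhds (-(1/2))) := by
    have h := (tendsto_const_nhds (x := -(1/2 : ℝ)) (f := atTop (α := ℕ))).div hcosθ one_ne_zero
    rw [div_one] at h
    exact h
  have hθsq : Tendsto (fun n => (th (m n))^2) atTop (nhds 0) := by
    have h := hθ0.pow 2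
    simpa using h
  have hub : Tendsto (fun n => -(1/2)*(1 - (th (m n))^2/16)^2) atTop (nhds (-(1/2))) := by
    have h1 : Tendsto (fun n => 1 - (th (m n))^2/16) atTop (nhds 1) := by
      have := (tendsto_const_nhds (x := (1:ℝ)) (f := atTop (α := ℕ))).sub (hθsq.div_const 16)
      simpa using this
    have h2 := (h1.pow 2).const_mul (-(1/2 : ℝ))
    simpa using h2
  have hratio : Tendsto (fun n => Real.log (lam (m n))/(th (m n))^2) atTop (nhds (-(1/2))) := by
    apply tendsto_of_tendsto_of_tendsto_of_le_of_le' hlb hub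
    · filter_upwards [hθ1] with n hn
      exact log_cos_lower (th_pos _) hn
    · filter_upwards [hθ1] with n hn
      exact log_cos_upper (th_pos _) hn
  -- main term limit
  have hg : Tendsto (fun n => x n^2 * Real.log (lam (m n))) atTop (nhds (-(π^2/8))) := by
    have h := (hxθ.pow 2).mul hratio
    have heq : ∀ n, (x n * th (m n))^2 * (Real.log (lam (m n))/(th (m n))^2)
        = x n^2 * Real.log (lam (m n)) := by
      intro n
      have := th_pos (m n)
      field_simp
    have hval : (π/2)^2 * (-(1/2)) = -(π^2/8) := by ring
    rw [hval] at h
    exact h.congr heq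
  have hx2n : Tendsto (fun n => x n^2/(n:ℝ)) atTop (nhds 0) := by
    have hdiv := hxo.tendsto_div_nhds_zero
    have h := hdiv.mul hdiv
    rw [mul_zero] at h
    apply h.congr
    intro n
    rw [div_mul_div_comm, Real.mul_self_sqrt (Nat.cast_nonneg n)]
    ring
  have hh : Tendsto (fun n => x n^2 * Real.log (lam (m n)) + x n^2/(n:ℝ) * Real.log C)
      atTop (nhds (-(π^2/8))) := by
    have h := hg.add (hx2n.mul_const (Real.log C))
    simpa using h
  -- squeeze
  apply tendsto_of_tendsto_of_tendsto_of_le_of_le' hg hh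
  · filter_upwards [hEv, hm1, hmn, eventually_ge_atTop 1] with n hEq hm1' hmn' hn1
    rw [hEq]
    have hlam := lam_pos hm1'
    have hQge := Q_ge (m n) n
    have hQpos : 0 < Q (m n) n := lt_of_lt_of_le (pow_pos hlam n) hQge
    have hlog : (n : ℝ) * Real.log (lam (m n)) ≤ Real.log (Q (m n) n) := by
      rw [← Real.log_pow]
      exact Real.log_le_log (pow_pos hlam n) hQge
    have hnn : (0:ℝ) < n := by exact_mod_cast hn1
    calc x n^2 * Real.log (lam (m n)) = x n^2/(n:ℝ) * ((n:ℝ) * Real.log (lam (m n))) := by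
          field_simp
      _ ≤ x n^2/(n:ℝ) * Real.log (Q (m n) n) := by
          apply mul_le_mul_of_nonneg_left hlog (by positivity)
  · filter_upwards [hEv, hm1, hmn, eventually_ge_atTop 1] with n hEq hm1' hmn' hn1
    rw [hEq]
    have hlam := lam_pos hm1'
    have hQup := Q_le (m n) n hm1' hmn'
    have hQge := Q_ge (m n) n
    have hQpos : 0 < Q (m n) n := lt_of_lt_of_le (pow_pos hlam n) hQge
    have hnn : (0:ℝ) < n := by exact_mod_cast hn1
    have hlog : Real.log (Q (m n) n) ≤ Real.log C + (n : ℝ) * Real.log (lam (m n)) := by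
      calc Real.log (Q (m n) n) ≤ Real.log (C * (lam (m n))^n) := by
            apply Real.log_le_log hQpos hQup
        _ = Real.log C + (n : ℝ) * Real.log (lam (m n)) := by
            rw [Real.log_mul (ne_of_gt hC) (ne_of_gt (pow_pos hlam n)), Real.log_pow]
    calc x n^2/(n:ℝ) * Real.log (Q (m n) n)
        ≤ x n^2/(n:ℝ) * (Real.log C + (n : ℝ) * Real.log (lam (m n))) := by
          apply mul_le_mul_of_nonneg_left hlog (by positivity)
      _ = x n^2 * Real.log (lam (m n)) + x n^2/(n:ℝ) * Real.log C := by
          field_simp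
          ring

end SDW

/-- Mogulskii small deviations: if `x n → ∞` and `x n = o(√n)`, then
`(x n)²/n · log P(max_{j ≤ n} |X_j| ≤ x n) → -π²/8`. -/
theorem srwZ_small_deviations
    (P : Measure (ℕ → ℤ)) (hP : IsSRWZ P)
    (x : ℕ → ℝ) (hx : Tendsto x atTop atTop)
    (hxo : (fun n : ℕ => x n) =o[atTop] fun n : ℕ => Real.sqrt n) :
    Tendsto
      (fun n : ℕ =>
        x n ^ 2 / n *
          Real.log ((P {ω : ℕ → ℤ | ∀ j ≤ n, |(ω j : ℝ)| ≤ x n}).toReal))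
      atTop (nhds (-(π ^ 2 / 8))) :=
  SDW.main P hP x hx hxo

end
end

section
/- Suppose the offspring distribution Z satisfies P(Z = 0) = 0 and E[Z^{1+δ}] < ∞ for some δ > 0. For a vertex v of a tree T define D_T(v) := ∏_{v' < v} deg(v'), the product of the numbers of children over all strict ancestors of v, and set M_T(n) := max{ D_T(v) : |v| = n }. Then there exists α > 0 (any α > E[Z^{1+δ}]^{1/δ} works) such that for GW-almost every tree T there exists N (depending on T) with M_T(n) ≤ α^n for all n ≥ N. -/
open MeasureTheory ProbabilityTheory Filter Real
open scoped ENNReal NNReal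

noncomputable section

/-- `D_T(v) = ∏_{u < v} deg(u)`: the product of the numbers of children over all strict
ancestors of `v` (the strict ancestors of `v` are its proper suffixes `v.drop (j+1)`). -/
def DTprod (T : GWTree) (v : List ℕ) : ℕ :=
  ∏ j ∈ Finset.range v.length, T.deg (v.drop (j + 1))

/-- `M_T(n) = max{D_T(v) : |v| = n}`. -/
def MTn (T : GWTree) (n : ℕ) : ℕ :=
  sSup {m : ℕ | ∃ v, T.mem v ∧ v.length = n ∧ DTprod T v = m}

section AuxGW

/-- `i :: u` is a vertex of `T` iff `i < deg T u`. -/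
lemma GWTree.mem_cons_iff (T : GWTree) (u : List ℕ) (i : ℕ) :
    T.mem (i :: u) ↔ i < T.deg u := by
  classical
  set F := (T.fin_children u).toFinset with hF
  have hmemF : ∀ j, j ∈ F ↔ T.mem (j :: u) := fun j => by
    simp [hF, Set.Finite.mem_toFinset, Set.mem_setOf_eq]
  have hdc : ∀ j k, j ∈ F → k ≤ j → k ∈ F := fun j k hj hk =>
    (hmemF k).2 (T.sibling_mem j k u ((hmemF j).1 hj) hk)
  have key : ∀ j, j ∈ F ↔ j < F.card := by
    intro j
    constructor
    · intro hj
      have hsub : Finset.range (j + 1) ⊆ F := fun k hk =>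
        hdc j k hj (Nat.lt_succ_iff.1 (Finset.mem_range.1 hk))
      have := Finset.card_le_card hsub
      simpa using this
    · intro hj
      by_contra hjF
      have hsub : F ⊆ Finset.range j := fun k hk => Finset.mem_range.2 (by
        by_contra hkj
        exact hjF (hdc k j hk (le_of_not_gt hkj)))
      have := Finset.card_le_card hsub
      simp only [Finset.card_range] at this
      omega
  rw [← hmemF i, key]
  rfl

lemma deg_genTree (f : List ℕ → ℕ) (u : List ℕ) (hu : genMem f u) :
    (genTree f).deg u = f u := by
  have h : ∀ i, i < (genTree f).deg u ↔ i < f u := fun i => by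
    rw [← GWTree.mem_cons_iff]
    exact ⟨fun h => h.2, fun h => ⟨hu, h⟩⟩
  have h1 := h ((genTree f).deg u)
  have h2 := h (f u)
  omega

lemma genMem_drop (f : List ℕ → ℕ) :
    ∀ v : List ℕ, genMem f v → ∀ k, genMem f (v.drop k)
  | [], h, k => by simpa using h
  | a :: w, h, 0 => h
  | a :: w, h, k + 1 => genMem_drop f w h.1 k

lemma genMem_head_lt (f : List ℕ → ℕ) :
    ∀ v : List ℕ, genMem f v → ∀ j < v.length,
      (v.drop j).headI < f (v.drop (j + 1))
  | [], _, j, hj => absurd hj (by simp)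
  | a :: w, h, 0, _ => by simpa using h.2
  | a :: w, h, j + 1, hj => by
      simpa using genMem_head_lt f w h.1 j (by simpa using hj)

lemma DTprod_genTree (f : List ℕ → ℕ) (v : List ℕ) (hv : genMem f v) :
    DTprod (genTree f) v = ∏ j ∈ Finset.range v.length, f (v.drop (j + 1)) := by
  unfold DTprod
  exact Finset.prod_congr rfl fun j _ => deg_genTree f _ (genMem_drop f v hv (j + 1))

lemma measurableSet_gwMem (v : List ℕ) : MeasurableSet {T : GWTree | T.mem v} := by
  refine ⟨{g : List ℕ → Prop | g v}, ?_, rfl⟩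
  have : {g : List ℕ → Prop | g v} = (fun g : List ℕ → Prop => g v) ⁻¹' {p : Prop | p} := rfl
  rw [this]
  exact measurable_pi_apply v MeasurableSpace.measurableSet_top

lemma measurable_deg (u : List ℕ) : Measurable fun T : GWTree => T.deg u := by
  classical
  apply measurable_to_countable'
  intro d
  have hset : (fun T : GWTree => T.deg u) ⁻¹' {d} =
      ⋂ i : ℕ, if i < d then {T : GWTree | T.mem (i :: u)}
        else {T : GWTree | T.mem (i :: u)}ᶜ := by
    ext T
    simp only [Set.mem_preimage, Set.mem_singleton_iff, Set.mem_iInter]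
    constructor
    · rintro rfl i
      by_cases h : i < T.deg u
      · rw [if_pos h]
        exact (T.mem_cons_iff u i).2 h
      · rw [if_neg h]
        exact fun hm => h ((T.mem_cons_iff u i).1 hm)
    · intro h
      have h1 := h (T.deg u)
      have h2 := h d
      rcases lt_trichotomy (T.deg u) d with hd | hd | hd
      · rw [if_pos hd] at h1
        have := (T.mem_cons_iff u (T.deg u)).1 h1
        omega
      · exact hd
      · rw [if_neg (lt_irrefl d)] at h2
        exact absurd ((T.mem_cons_iff u d).2 hd) h2
  rw [hset]
  refine MeasurableSet.iInter fun i => ?_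
  split_ifs
  · exact measurableSet_gwMem (i :: u)
  · exact (measurableSet_gwMem (i :: u)).compl

lemma measurable_DTprod (v : List ℕ) :
    Measurable fun T : GWTree => DTprod T v := by
  unfold DTprod
  exact Finset.measurable_prod _ fun j _ => measurable_deg _

/-- Expectation of a finite product of compositions with independent random variables. -/
lemma lintegral_finset_prod_comp {Ω ι : Type*} [MeasurableSpace Ω] {P : Measure Ω}
    [IsProbabilityMeasure P] {ξ : ι → Ω → ℕ}
    (hind : iIndepFun ξ P) (hmeas : ∀ i, Measurable (ξ i))
    (g : ι → ℕ → ℝ≥0∞) (s : Finset ι) :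
    ∫⁻ ω, ∏ i ∈ s, g i (ξ i ω) ∂P = ∏ i ∈ s, ∫⁻ ω, g i (ξ i ω) ∂P := by
  classical
  have hη : iIndepFun (fun i => g i ∘ ξ i) P :=
    hind.comp _ fun i => measurable_from_top
  have hmη : ∀ i, Measurable (g i ∘ ξ i) := fun i =>
    measurable_from_top.comp (hmeas i)
  induction s using Finset.induction with
  | empty => simp
  | @insert a s ha ih =>
    have hindep : IndepFun (∏ j ∈ s, (g j ∘ ξ j)) (g a ∘ ξ a) P :=
      hη.indepFun_finset_prod_of_notMem hmη ha
    have hprodeq : (fun ω => ∏ i ∈ s, g i (ξ i ω)) = ∏ j ∈ s, (g j ∘ ξ j) := by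
      ext ω; simp [Finset.prod_apply]
    have hmprod : Measurable (∏ j ∈ s, (g j ∘ ξ j)) := by
      rw [← hprodeq]; exact Finset.measurable_prod s fun i _ => hmη i
    have hmul := lintegral_mul_eq_lintegral_mul_lintegral_of_indepFun (hmη a) hmprod hindep.symm
    simp only [Finset.prod_insert ha]
    calc ∫⁻ ω, g a (ξ a ω) * ∏ i ∈ s, g i (ξ i ω) ∂P
        = ∫⁻ ω, ((g a ∘ ξ a) * ∏ j ∈ s, (g j ∘ ξ j)) ω ∂P :=
          lintegral_congr fun ω => by simp [Finset.prod_apply]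
      _ = (∫⁻ ω, (g a ∘ ξ a) ω ∂P) * ∫⁻ ω, (∏ j ∈ s, (g j ∘ ξ j)) ω ∂P := hmul
      _ = (∫⁻ ω, g a (ξ a ω) ∂P) * ∏ i ∈ s, ∫⁻ ω, g i (ξ i ω) ∂P := by
          have he : ∫⁻ ω, (∏ j ∈ s, (g j ∘ ξ j)) ω ∂P = ∫⁻ ω, ∏ i ∈ s, g i (ξ i ω) ∂P :=
            lintegral_congr fun ω => by simp [Finset.prod_apply]
          rw [he, ih]
          rfl

end AuxGW


section AuxProb

/-- The elementary weight function `φ c k = 1_{c < k} k^δ`. -/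
def gwPhi (δ : ℝ) (c k : ℕ) : ℝ≥0∞ := if c < k then (k : ℝ≥0∞) ^ δ else 0

/-- `ψ c = ∫ φ c dν`. -/
def gwPsi (ν : Measure ℕ) (δ : ℝ) (c : ℕ) : ℝ≥0∞ := ∫⁻ k, gwPhi δ c k ∂ν

/-- The weight of the potential vertex `v`. -/
def gwTerm {Ω : Type*} (ξ : List ℕ → Ω → ℕ) (δ : ℝ) (v : List ℕ) (ω : Ω) : ℝ≥0∞ :=
  ∏ j ∈ Finset.range v.length, gwPhi δ ((v.drop j).headI) (ξ (v.drop (j + 1)) ω)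

/-- `Y n = ∑_{|v| = n} D(v)^δ`. -/
def gwY {Ω : Type*} (ξ : List ℕ → Ω → ℕ) (δ : ℝ) (n : ℕ) (ω : Ω) : ℝ≥0∞ :=
  ∑' v : List ℕ, if v.length = n then gwTerm ξ δ v ω else 0

lemma measurable_gwTerm {Ω : Type*} [MeasurableSpace Ω] {ξ : List ℕ → Ω → ℕ}
    (hmeas : ∀ v, Measurable (ξ v)) (δ : ℝ) (v : List ℕ) : Measurable (gwTerm ξ δ v) := by
  unfold gwTerm
  exact Finset.measurable_prod _ fun j _ => Measurable.comp' measurable_from_top (hmeas _)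

lemma measurable_gwY {Ω : Type*} [MeasurableSpace Ω] {ξ : List ℕ → Ω → ℕ}
    (hmeas : ∀ v, Measurable (ξ v)) (δ : ℝ) (n : ℕ) : Measurable (gwY ξ δ n) := by
  unfold gwY
  refine Measurable.ennreal_tsum fun v => ?_
  by_cases h : v.length = n
  · simpa [h] using measurable_gwTerm hmeas δ v
  · simp [h]

lemma gwPsi_tsum (ν : Measure ℕ) [IsProbabilityMeasure ν] {δ : ℝ} (hδ : 0 ≤ δ) :
    ∑' c : ℕ, gwPsi ν δ c = ∫⁻ k, (k : ℝ≥0∞) ^ ((1 : ℝ) + δ) ∂ν := by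
  simp only [gwPsi]
  rw [← lintegral_tsum fun c => measurable_from_top.aemeasurable]
  refine lintegral_congr fun k => ?_
  have h1 : ∑' c : ℕ, gwPhi δ c k = ∑ c ∈ Finset.range k, (k : ℝ≥0∞) ^ δ := by
    rw [tsum_eq_sum (s := Finset.range k) (f := fun c => gwPhi δ c k)
      (fun c hc => by
        simp only [gwPhi]
        exact if_neg (by simp only [Finset.mem_range, not_lt] at hc; omega))]
    exact Finset.sum_congr rfl fun c hc => by
      simp only [gwPhi]
      exact if_pos (Finset.mem_range.1 hc)
  rw [h1, Finset.sum_const, Finset.card_range, nsmul_eq_mul,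
    ENNReal.rpow_add_of_nonneg 1 δ zero_le_one hδ, ENNReal.rpow_one]

lemma gwTerm_lintegral {Ω : Type*} [MeasurableSpace Ω] {P : Measure Ω}
    [IsProbabilityMeasure P] {ξ : List ℕ → Ω → ℕ}
    (hind : iIndepFun ξ P)
    (hmeas : ∀ v, Measurable (ξ v)) {ν : Measure ℕ} (hlaw : ∀ v, P.map (ξ v) = ν)
    (δ : ℝ) (v : List ℕ) :
    ∫⁻ ω, gwTerm ξ δ v ω ∂P =
      ∏ j ∈ Finset.range v.length, gwPsi ν δ ((v.drop j).headI) := by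
  classical
  set n := v.length with hn
  set g : List ℕ → ℕ → ℝ≥0∞ := fun u k => gwPhi δ ((v.drop (n - u.length - 1)).headI) k
    with hg
  have hkey : ∀ j ∈ Finset.range n, ∀ k, g (v.drop (j + 1)) k = gwPhi δ ((v.drop j).headI) k := by
    intro j hj k
    rw [hg]
    simp only
    congr 3
    rw [List.length_drop]
    have := Finset.mem_range.1 hj
    omega
  have hinj : ∀ x ∈ Finset.range n, ∀ y ∈ Finset.range n,
      v.drop (x + 1) = v.drop (y + 1) → x = y := by
    intro x hx y hy hxy
    have h := congrArg List.length hxy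
    rw [List.length_drop, List.length_drop] at h
    have hx' := Finset.mem_range.1 hx
    have hy' := Finset.mem_range.1 hy
    omega
  calc ∫⁻ ω, gwTerm ξ δ v ω ∂P
      = ∫⁻ ω, ∏ u ∈ (Finset.range n).image (fun j => v.drop (j + 1)), g u (ξ u ω) ∂P := by
        refine lintegral_congr fun ω => ?_
        rw [Finset.prod_image hinj]
        simp only [gwTerm]
        exact Finset.prod_congr rfl fun j hj => (hkey j hj _).symm
    _ = ∏ u ∈ (Finset.range n).image (fun j => v.drop (j + 1)), ∫⁻ ω, g u (ξ u ω) ∂P :=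
        lintegral_finset_prod_comp hind hmeas g _
    _ = ∏ j ∈ Finset.range n, ∫⁻ ω, g (v.drop (j + 1)) (ξ (v.drop (j + 1)) ω) ∂P := by
        rw [Finset.prod_image hinj]
    _ = ∏ j ∈ Finset.range n, gwPsi ν δ ((v.drop j).headI) := by
        refine Finset.prod_congr rfl fun j hj => ?_
        have h1 : ∀ ω, g (v.drop (j + 1)) (ξ (v.drop (j + 1)) ω) =
            gwPhi δ ((v.drop j).headI) (ξ (v.drop (j + 1)) ω) := fun ω => hkey j hj _
        simp only [h1, gwPsi]
        rw [← hlaw (v.drop (j + 1)), lintegral_map measurable_from_top (hmeas _)]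

lemma tsum_length_prod (ψ : ℕ → ℝ≥0∞) :
    ∀ n : ℕ, (∑' v : List ℕ, if v.length = n
        then ∏ j ∈ Finset.range n, ψ ((v.drop j).headI) else 0) = (∑' c, ψ c) ^ n := by
  intro n
  induction n with
  | zero =>
    rw [pow_zero, tsum_eq_single ([] : List ℕ)
      (fun v hv => if_neg (by simpa [List.length_eq_zero_iff] using hv))]
    simp
  | succ n ih =>
    classical
    set G : List ℕ → ℝ≥0∞ := fun v => if v.length = n + 1
      then ∏ j ∈ Finset.range (n + 1), ψ ((v.drop j).headI) else 0 with hG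
    have hinj : Function.Injective (fun p : ℕ × List ℕ => p.1 :: p.2) := by
      intro p q h
      cases p; cases q
      simpa [Prod.ext_iff] using h
    have hsupp : Function.support G ⊆ Set.range (fun p : ℕ × List ℕ => p.1 :: p.2) := by
      intro x hx
      match x with
      | [] => exact absurd (show G [] = 0 by simp [hG]) hx
      | a :: w => exact ⟨(a, w), rfl⟩
    have h2 : ∀ (a : ℕ) (w : List ℕ), G (a :: w) = ψ a *
        (if w.length = n then ∏ j ∈ Finset.range n, ψ ((w.drop j).headI) else 0) := by
      intro a w
      by_cases h : w.length = n
      · rw [hG]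
        simp only
        rw [if_pos (by simp [h]), if_pos h, Finset.prod_range_succ']
        simp only [List.drop_succ_cons, List.drop_zero, List.headI]
        exact mul_comm _ _
      · rw [hG]
        simp only
        rw [if_neg (by simp [h]), if_neg h, mul_zero]
    calc ∑' v : List ℕ, G v = ∑' p : ℕ × List ℕ, G (p.1 :: p.2) :=
        (Function.Injective.tsum_eq hinj hsupp).symm
      _ = ∑' (a : ℕ) (w : List ℕ), G (a :: w) := ENNReal.tsum_prod'
      _ = ∑' a : ℕ, ψ a * ∑' w : List ℕ,
          (if w.length = n then ∏ j ∈ Finset.range n, ψ ((w.drop j).headI) else 0) := by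
          refine tsum_congr fun a => ?_
          rw [← ENNReal.tsum_mul_left]
          exact tsum_congr fun w => h2 a w
      _ = (∑' c, ψ c) * (∑' c, ψ c) ^ n := by rw [ih, ENNReal.tsum_mul_right]
      _ = (∑' c, ψ c) ^ (n + 1) := (pow_succ' _ _).symm

lemma gwTerm_eq_of_genMem {Ω : Type*} (ξ : List ℕ → Ω → ℕ) {δ : ℝ} (hδ : 0 ≤ δ) (ω : Ω)
    (v : List ℕ) (hv : genMem (fun u => ξ u ω) v) :
    gwTerm ξ δ v ω = ((DTprod (genTree fun u => ξ u ω) v : ℕ) : ℝ≥0∞) ^ δ := by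
  have h1 : gwTerm ξ δ v ω =
      ∏ j ∈ Finset.range v.length, ((ξ (v.drop (j + 1)) ω : ℝ≥0∞)) ^ δ := by
    simp only [gwTerm]
    refine Finset.prod_congr rfl fun j hj => ?_
    simp only [gwPhi]
    rw [if_pos (genMem_head_lt _ v hv j (Finset.mem_range.1 hj))]
  rw [h1, ENNReal.prod_rpow_of_nonneg hδ, ← Nat.cast_prod,
    DTprod_genTree _ v hv]


lemma measurableSet_genMem {Ω : Type*} [MeasurableSpace Ω] (ξ : List ℕ → Ω → ℕ)
    (hmeas : ∀ v, Measurable (ξ v)) :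
    ∀ v : List ℕ, MeasurableSet {ω | genMem (fun u => ξ u ω) v}
  | [] => by
    have h : {ω : Ω | genMem (fun u => ξ u ω) ([] : List ℕ)} = Set.univ := by
      ext ω; simp [genMem]
    rw [h]; exact MeasurableSet.univ
  | i :: w => by
    have h1 : {ω : Ω | genMem (fun u => ξ u ω) (i :: w)} =
        {ω | genMem (fun u => ξ u ω) w} ∩ (ξ w ⁻¹' {k | i < k}) := rfl
    rw [h1]
    exact (measurableSet_genMem ξ hmeas w).inter
      ((hmeas w) MeasurableSpace.measurableSet_top)

lemma measurable_genTree {Ω : Type*} [MeasurableSpace Ω] (ξ : List ℕ → Ω → ℕ)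
    (hmeas : ∀ v, Measurable (ξ v)) :
    Measurable (fun ω => genTree fun u => ξ u ω : Ω → GWTree) := by
  intro s hs
  obtain ⟨s', hs', rfl⟩ := hs
  have hmem : Measurable (fun ω => genMem (fun u => ξ u ω) : Ω → List ℕ → Prop) := by
    apply measurable_pi_lambda
    intro v
    apply measurable_to_prop
    have h : (fun ω => genMem (fun u => ξ u ω) v) ⁻¹' {True} =
        {ω | genMem (fun u => ξ u ω) v} := by
      ext ω
      simp only [Set.mem_preimage, Set.mem_singleton_iff, Set.mem_setOf_eq]
      exact ⟨fun h => of_eq_true h, fun h => eq_true h⟩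
    rw [h]
    exact measurableSet_genMem ξ hmeas v
  exact hmem hs'

end AuxProb

/-- if `P(Z = 0) = 0` and `E[Z^(1+δ)] < ∞`, then for every
`α > E[Z^(1+δ)]^(1/δ)` (in particular such an `α > 0` exists), for `GW`-a.e. `T` there
is `N` with `M_T(n) ≤ α^n` for all `n ≥ N`. -/
theorem max_weight_exponential_bound
    (ν : Measure ℕ) [IsProbabilityMeasure ν]
    (hz0 : ν {0} = 0)
    (δ : ℝ) (hδ : 0 < δ) (hmom : ∫⁻ k, (k : ℝ≥0∞) ^ ((1 : ℝ) + δ) ∂ν < ⊤)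
    (GW : Measure GWTree) (hGW : IsGW ν GW) :
    ∀ α : ℝ, (∫⁻ k, (k : ℝ≥0∞) ^ ((1 : ℝ) + δ) ∂ν).toReal ^ ((1 : ℝ) / δ) < α →
      ∀ᵐ T ∂GW, ∃ N : ℕ, ∀ n, N ≤ n → (MTn T n : ℝ) ≤ α ^ n := by
  classical
  intro α hα
  obtain ⟨Ω, mΩ, P, hP, ξ, hind, hmeas, hlaw, hmap⟩ := hGW
  haveI := hP
  set m : ℝ≥0∞ := ∫⁻ k, (k : ℝ≥0∞) ^ ((1 : ℝ) + δ) ∂ν with hm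
  have hα0 : 0 < α := lt_of_le_of_lt (Real.rpow_nonneg ENNReal.toReal_nonneg _) hα
  have hmtop : m ≠ ⊤ := hmom.ne
  have hmlt : m.toReal < α ^ δ := by
    have h1 : (m.toReal ^ ((1 : ℝ) / δ)) ^ δ < α ^ δ :=
      Real.rpow_lt_rpow (Real.rpow_nonneg ENNReal.toReal_nonneg _) hα hδ
    calc m.toReal = m.toReal ^ ((1 : ℝ) / δ * δ) := by
          rw [one_div, inv_mul_cancel₀ hδ.ne', Real.rpow_one]
      _ = (m.toReal ^ ((1 : ℝ) / δ)) ^ δ := Real.rpow_mul ENNReal.toReal_nonneg _ _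
      _ < α ^ δ := h1
  set a : ℝ≥0∞ := ENNReal.ofReal α with ha
  set t : ℝ≥0∞ := a ^ δ with ht
  have ht_eq : t = ENNReal.ofReal (α ^ δ) := ENNReal.ofReal_rpow_of_pos hα0
  have ht0 : t ≠ 0 := by
    rw [ht_eq]
    simp only [ne_eq, ENNReal.ofReal_eq_zero, not_le]
    exact Real.rpow_pos_of_pos hα0 δ
  have httop : t ≠ ⊤ := by rw [ht_eq]; exact ENNReal.ofReal_ne_top
  have hmt : m < t := by
    rw [ht_eq]
    exact (ENNReal.lt_ofReal_iff_toReal_lt hmtop).2 hmlt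
  set q : ℝ≥0∞ := m / t with hq
  have hq1 : q < 1 := by
    rw [hq]
    rw [ENNReal.div_lt_iff (Or.inl ht0) (Or.inl httop), one_mul]
    exact hmt
  -- the expectation of `Y n` is `m ^ n`
  have hmite : ∀ (n : ℕ) (v : List ℕ),
      Measurable fun ω => if v.length = n then gwTerm ξ δ v ω else 0 := by
    intro n v
    by_cases h : v.length = n
    · simpa [h] using measurable_gwTerm hmeas δ v
    · simp [h]
  have hYint : ∀ n, ∫⁻ ω, gwY ξ δ n ω ∂P = m ^ n := by
    intro n
    calc ∫⁻ ω, gwY ξ δ n ω ∂P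
        = ∑' v : List ℕ, ∫⁻ ω, (if v.length = n then gwTerm ξ δ v ω else 0) ∂P := by
          simp only [gwY]
          exact lintegral_tsum fun v => (hmite n v).aemeasurable
      _ = ∑' v : List ℕ,
          (if v.length = n then ∏ j ∈ Finset.range n, gwPsi ν δ ((v.drop j).headI) else 0) := by
          refine tsum_congr fun v => ?_
          by_cases h : v.length = n
          · simp only [h, if_true]
            rw [gwTerm_lintegral hind hmeas hlaw δ v, h]
          · simp only [h, if_false]
            exact lintegral_zero
      _ = (∑' c, gwPsi ν δ c) ^ n := tsum_length_prod _ n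
      _ = m ^ n := by rw [gwPsi_tsum ν hδ.le, hm]
  -- bad events and Borel–Cantelli
  set bad : ℕ → Set Ω := fun n => {ω | ∃ v : List ℕ, v.length = n ∧
      genMem (fun u => ξ u ω) v ∧
      α ^ n < ((DTprod (genTree fun u => ξ u ω) v : ℕ) : ℝ)} with hbad
  have hsubset : ∀ n, bad n ⊆ {ω | t ^ n ≤ gwY ξ δ n ω} := by
    intro n ω hω
    obtain ⟨v, hvlen, hvmem, hvD⟩ := hω
    have hteq : gwTerm ξ δ v ω = ((DTprod (genTree fun u => ξ u ω) v : ℕ) : ℝ≥0∞) ^ δ :=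
      gwTerm_eq_of_genMem ξ hδ.le ω v hvmem
    have hD : ENNReal.ofReal (α ^ n) ≤ ((DTprod (genTree fun u => ξ u ω) v : ℕ) : ℝ≥0∞) := by
      rw [← ENNReal.ofReal_natCast]
      exact ENNReal.ofReal_le_ofReal hvD.le
    have hswap : t ^ n = (a ^ n : ℝ≥0∞) ^ δ := by
      rw [ht, ← ENNReal.rpow_natCast (a ^ δ) n, ← ENNReal.rpow_mul, mul_comm δ (n : ℝ),
        ENNReal.rpow_mul, ENNReal.rpow_natCast]
    have han : (a ^ n : ℝ≥0∞) = ENNReal.ofReal (α ^ n) := by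
      rw [ha, ← ENNReal.ofReal_pow hα0.le]
    have h1 : t ^ n ≤ gwTerm ξ δ v ω := by
      rw [hteq, hswap, han]
      exact ENNReal.rpow_le_rpow hD hδ.le
    refine le_trans h1 ?_
    simp only [gwY]
    have h2 := ENNReal.le_tsum (f := fun w : List ℕ =>
      if w.length = n then gwTerm ξ δ w ω else 0) v
    simpa [hvlen] using h2
  have hbadle : ∀ n, P (bad n) ≤ q ^ n := by
    intro n
    have h2 : P {ω | t ^ n ≤ gwY ξ δ n ω} ≤ (∫⁻ ω, gwY ξ δ n ω ∂P) / t ^ n :=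
      meas_ge_le_lintegral_div (measurable_gwY hmeas δ n).aemeasurable
        (pow_ne_zero n ht0) (ENNReal.pow_ne_top httop)
    rw [hYint n] at h2
    refine (measure_mono (hsubset n)).trans (h2.trans_eq ?_)
    rw [div_eq_mul_inv, ENNReal.inv_pow, ← mul_pow, ← div_eq_mul_inv]
  have hgeo : (∑' n : ℕ, q ^ n) ≠ ⊤ := by
    rw [ENNReal.tsum_geometric]
    exact ENNReal.inv_ne_top.2 fun h0 => hq1.not_ge (tsub_eq_zero_iff_le.1 h0)
  have hsum : (∑' n, P (bad n)) ≠ ⊤ :=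
    ne_top_of_le_ne_top hgeo (ENNReal.tsum_le_tsum hbadle)
  have hBC : ∀ᵐ ω ∂P, ∀ᶠ n in atTop, ω ∉ bad n := MeasureTheory.ae_eventually_notMem hsum
  -- the good event on trees
  set A : Set GWTree := ⋃ N : ℕ, ⋂ v : List ℕ,
    {T : GWTree | N ≤ v.length → T.mem v → ((DTprod T v : ℕ) : ℝ) ≤ α ^ v.length} with hA
  have hAmeas : MeasurableSet A := by
    refine MeasurableSet.iUnion fun N => MeasurableSet.iInter fun v => ?_
    by_cases hN : N ≤ v.length
    · have h : {T : GWTree | N ≤ v.length → T.mem v → ((DTprod T v : ℕ) : ℝ) ≤ α ^ v.length}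
          = {T : GWTree | T.mem v}ᶜ ∪
            ((fun T : GWTree => DTprod T v) ⁻¹' {k : ℕ | (k : ℝ) ≤ α ^ v.length}) := by
        ext T
        simp only [Set.mem_setOf_eq, Set.mem_union, Set.mem_compl_iff, Set.mem_preimage]
        constructor
        · intro hT
          by_cases hm : T.mem v
          · exact Or.inr (hT hN hm)
          · exact Or.inl hm
        · rintro (h | h) _ hm
          · exact absurd hm h
          · exact h
      rw [h]
      exact (measurableSet_gwMem v).compl.union
        ((measurable_DTprod v) MeasurableSpace.measurableSet_top)
    · have h : {T : GWTree | N ≤ v.length → T.mem v → ((DTprod T v : ℕ) : ℝ) ≤ α ^ v.length}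
          = Set.univ := by
        ext T; simp [hN]
      rw [h]
      exact MeasurableSet.univ
  have hAsub : ∀ T ∈ A, ∃ N : ℕ, ∀ n, N ≤ n → ((MTn T n : ℕ) : ℝ) ≤ α ^ n := by
    intro T hT
    obtain ⟨N, hN⟩ := Set.mem_iUnion.1 hT
    refine ⟨N, fun n hn => ?_⟩
    have hb : ∀ x ∈ {m : ℕ | ∃ v, T.mem v ∧ v.length = n ∧ DTprod T v = m}, x ≤ ⌊α ^ n⌋₊ := by
      rintro x ⟨v, hvm, hvlen, rfl⟩
      have hx : ((DTprod T v : ℕ) : ℝ) ≤ α ^ v.length :=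
        (Set.mem_iInter.1 hN v) (by rw [hvlen]; exact hn) hvm
      rw [hvlen] at hx
      exact Nat.le_floor hx
    have h1 : MTn T n ≤ ⌊α ^ n⌋₊ := csSup_le' fun x hx => hb x hx
    calc ((MTn T n : ℕ) : ℝ) ≤ (⌊α ^ n⌋₊ : ℝ) := Nat.cast_le.2 h1
      _ ≤ α ^ n := Nat.floor_le (by positivity)
  have hgood : ∀ ω : Ω, (∀ᶠ n in atTop, ω ∉ bad n) → (genTree fun u => ξ u ω) ∈ A := by
    intro ω hω
    obtain ⟨N, hN⟩ := eventually_atTop.1 hω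
    refine Set.mem_iUnion.2 ⟨N, Set.mem_iInter.2 fun v => ?_⟩
    intro hNv hvmem
    by_contra hlt
    push_neg at hlt
    exact hN v.length hNv ⟨v, rfl, hvmem, hlt⟩
  rw [hmap, ae_iff]
  have hAc : (Measure.map (fun ω => genTree fun v => ξ v ω) P) Aᶜ = 0 := by
    rw [Measure.map_apply (measurable_genTree ξ hmeas) hAmeas.compl]
    have hPz : P {ω : Ω | ¬ ∀ᶠ n in atTop, ω ∉ bad n} = 0 := ae_iff.1 hBC
    refine measure_mono_null (fun ω hω => ?_) hPz
    exact fun hgoodω => hω (hgood ω hgoodω)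
  refine measure_mono_null ?_ hAc
  intro T hT hTA
  exact hT (hAsub T hTA)


end
end

section
/- Fix an integer m ≥ 2 and let M := 4m/(m+1)². There exist constants c_1, c_2 ∈ (0,1), depending only on m, with the following property. Let T be any infinite rooted tree in which every vertex has at least m children, let BRW_T be the biased random walk on T defined by: from the root, step to each child with probability 1/deg(0); from a non-root vertex v with parent u, step to u with probability m/(deg(v)+m) and to each child of v with probability 1/(deg(v)+m). Define B_n := #{ j < 2n : X_j = 0 or deg(X_j) > m }. Then for every event A in the path space of T that depends only on the first 2n steps and such that every path in A starts at the root and satisfies X_{2n} = 0: M^n · E_{BRW_T}[ c_1^{B_n} · 1_A ] ≤ SRW_T(A) ≤ M^n · E_{BRW_T}[ c_2^{B_n} · 1_A ]. -/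
open MeasureTheory ProbabilityTheory Filter Real
open scoped ENNReal NNReal

noncomputable section

/-- Transition probabilities of the `m`-biased random walk on `T`: from the root, step
to each child with probability `1/deg(0)`; from a non-root vertex `v`, step to the
parent with probability `m/(deg(v)+m)` and to each child with probability
`1/(deg(v)+m)`. -/
def bstep (T : GWTree) (m : ℕ) (u v : List ℕ) : ℝ≥0∞ := by
  classical
  exact
    if u = [] then (if ∃ i, v = i :: u ∧ T.mem v then ((T.deg u : ℝ≥0∞))⁻¹ else 0)
    else if v = u.tail then (m : ℝ≥0∞) / ((T.deg u : ℝ≥0∞) + m)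
    else if ∃ i, v = i :: u ∧ T.mem v then ((T.deg u : ℝ≥0∞) + m)⁻¹ else 0

/-- `Q` is the law of the `m`-biased random walk on `T` started at the root. -/
def IsBRW (T : GWTree) (m : ℕ) (Q : Measure (ℕ → List ℕ)) : Prop :=
  IsProbabilityMeasure Q ∧
  ∀ (x : ℕ → List ℕ) (n : ℕ),
    Q {ω | ∀ j ≤ n, ω j = x j} =
      (if x 0 = ([] : List ℕ) then 1 else 0) *
        ∏ j ∈ Finset.range n, bstep T m (x j) (x (j + 1))

/-- `B_n = #{j < 2n : X_j = 0 or deg(X_j) > m}`. -/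
def Bcount (T : GWTree) (m n : ℕ) (ω : ℕ → List ℕ) : ℕ :=
  Set.ncard {j : ℕ | j < 2 * n ∧ (ω j = ([] : List ℕ) ∨ m < T.deg (ω j))}


namespace SBAux

/-! ### Real-number constants and inequalities -/

/-- lower constant `c₁ = (m+1)/(2m)` -/
def rcOne (m : ℝ) : ℝ := (m + 1) / (2 * m)

/-- upper constant `c₂ = (2m+1)(m+1)/(2m(m+2))` -/
def rcTwo (m : ℝ) : ℝ := ((2 * m + 1) * (m + 1)) / ((2 * m) * (m + 2))

lemma rcOne_mem {m : ℝ} (hm : 2 ≤ m) : rcOne m ∈ Set.Ioo (0 : ℝ) 1 := by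
  constructor
  · apply div_pos <;> linarith
  · unfold rcOne
    rw [div_lt_one (by linarith)]
    linarith

lemma rcTwo_mem {m : ℝ} (hm : 2 ≤ m) : rcTwo m ∈ Set.Ioo (0 : ℝ) 1 := by
  constructor
  · apply div_pos <;> nlinarith
  · unfold rcTwo
    rw [div_lt_one (by nlinarith)]
    nlinarith

lemma rcOne_nonneg (m : ℕ) : 0 ≤ rcOne (m : ℝ) := by
  unfold rcOne; positivity

lemma rcTwo_nonneg (m : ℕ) : 0 ≤ rcTwo (m : ℝ) := by
  unfold rcTwo; positivity

lemma key_low (m d : ℝ) (hm : 2 ≤ m) (hd : m ≤ d) : (d + m)⁻¹ ≤ (d + 1)⁻¹ := by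
  rw [inv_eq_one_div, inv_eq_one_div, div_le_div_iff₀ (by linarith) (by linarith)]
  linarith

lemma key_up (m d : ℝ) (hm : 2 ≤ m) (hd : m + 1 ≤ d) :
    (d + 1)⁻¹ ≤ (2 * m + 1) / ((m + 2) * (d + m)) := by
  rw [inv_eq_one_div, div_le_div_iff₀ (by linarith) (by nlinarith)]
  nlinarith [mul_nonneg (by linarith : (0:ℝ) ≤ m - 1) (by linarith : (0:ℝ) ≤ d - m - 1)]

lemma key_root_up (m : ℝ) (hm : 2 ≤ m) : (1 : ℝ) ≤ 2 * m / (m + 1) * rcTwo m := by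
  unfold rcTwo
  have h1 : (0:ℝ) < (m + 1) * (2 * m * (m + 2)) :=
    mul_pos (by linarith) (mul_pos (by linarith) (by linarith))
  rw [div_mul_div_comm, le_div_iff₀ h1]
  nlinarith [mul_nonneg (mul_nonneg (by linarith : (0:ℝ) ≤ 2 * m)
    (by linarith : (0:ℝ) ≤ m + 1)) (by linarith : (0:ℝ) ≤ m - 1)]

lemma eq_root_low (m : ℝ) (hm : 2 ≤ m) : 2 * m / (m + 1) * rcOne m = 1 := by
  unfold rcOne; field_simp

lemma eq_par_low (m d : ℝ) (hm : 2 ≤ m) (hd0 : 0 < d) :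
    2 / (m + 1) * rcOne m * (m / (d + m)) = (d + m)⁻¹ := by
  unfold rcOne; field_simp

lemma eq_par_up (m d : ℝ) (hm : 2 ≤ m) (hd0 : 0 < d) :
    2 / (m + 1) * rcTwo m * (m / (d + m)) = (2 * m + 1) / ((m + 2) * (d + m)) := by
  unfold rcTwo; field_simp

lemma eq_child_low (m d : ℝ) (hm : 2 ≤ m) (hd0 : 0 < d) :
    2 * m / (m + 1) * rcOne m * (d + m)⁻¹ = (d + m)⁻¹ := by
  unfold rcOne; field_simp

lemma eq_child_up (m d : ℝ) (hm : 2 ≤ m) (hd0 : 0 < d) :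
    2 * m / (m + 1) * rcTwo m * (d + m)⁻¹ = (2 * m + 1) / ((m + 2) * (d + m)) := by
  unfold rcTwo; field_simp

lemma eq_good_par (m : ℝ) (hm : 2 ≤ m) : 2 / (m + 1) * (m / (m + m)) = (m + 1)⁻¹ := by
  field_simp; ring

lemma eq_good_child (m : ℝ) (hm : 2 ≤ m) : 2 * m / (m + 1) * (m + m)⁻¹ = (m + 1)⁻¹ := by
  field_simp; ring

/-! ### ENNReal conversion helpers -/

lemma enn_inv_nat {k : ℕ} (hk : 0 < k) :
    ((k : ℝ≥0∞))⁻¹ = ENNReal.ofReal ((k : ℝ))⁻¹ := by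
  rw [← ENNReal.ofReal_natCast k, ← ENNReal.ofReal_inv_of_pos (by exact_mod_cast hk)]

lemma enn_div_nat (a k : ℕ) (hk : 0 < k) :
    (a : ℝ≥0∞) / (k : ℝ≥0∞) = ENNReal.ofReal ((a : ℝ) / (k : ℝ)) := by
  rw [ENNReal.ofReal_div_of_pos (by exact_mod_cast hk), ENNReal.ofReal_natCast,
    ENNReal.ofReal_natCast]

lemma enn_one_le_ofReal {r : ℝ} (h : 1 ≤ r) : (1 : ℝ≥0∞) ≤ ENNReal.ofReal r := by
  rw [← ENNReal.ofReal_one]; exact ENNReal.ofReal_le_ofReal h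

/-! ### step / bstep basic facts -/

lemma step_cond {T : GWTree} {u v : List ℕ} (h : T.step u v ≠ 0) :
    (u ≠ [] ∧ v = u.tail) ∨ ∃ i, v = i :: u ∧ T.mem v := by
  by_contra hc
  exact h (by unfold GWTree.step; rw [if_neg hc])

lemma cons_ne_tail {u v : List ℕ} (hu : u ≠ []) (h : ∃ i : ℕ, v = i :: u) : v ≠ u.tail := by
  obtain ⟨i, rfl⟩ := h
  intro he
  have h1 := congrArg List.length he
  simp only [List.length_cons, List.length_tail] at h1
  have h2 : 0 < u.length := List.length_pos_iff.mpr hu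
  omega

lemma bstep_of_step_eq_zero {T : GWTree} {m : ℕ} {u v : List ℕ} (h : T.step u v = 0) :
    bstep T m u v = 0 := by
  have hC : ¬((u ≠ [] ∧ v = u.tail) ∨ ∃ i, v = i :: u ∧ T.mem v) := by
    intro hC
    unfold GWTree.step at h
    rw [if_pos hC] at h
    exact (ENNReal.inv_ne_zero.mpr (ENNReal.natCast_ne_top _)) h
  push_neg at hC
  obtain ⟨hC1, hC2⟩ := hC
  unfold bstep
  by_cases hu : u = []
  · rw [if_pos hu, if_neg]
    rintro ⟨i, hvi, hmemv⟩
    exact hC2 i hvi hmemv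
  · rw [if_neg hu, if_neg (hC1 hu), if_neg]
    rintro ⟨i, hvi, hmemv⟩
    exact hC2 i hvi hmemv

lemma step_eval_root {T : GWTree} {v : List ℕ} (h : ∃ i, v = i :: ([] : List ℕ) ∧ T.mem v) :
    T.step ([] : List ℕ) v = ((T.deg ([] : List ℕ) : ℝ≥0∞))⁻¹ := by
  unfold GWTree.step
  rw [if_pos (Or.inr h), if_pos rfl, Nat.add_zero]

lemma step_eval_nonroot {T : GWTree} {u v : List ℕ} (hu : u ≠ [])
    (h : (u ≠ [] ∧ v = u.tail) ∨ ∃ i, v = i :: u ∧ T.mem v) :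
    T.step u v = (((T.deg u + 1 : ℕ)) : ℝ≥0∞)⁻¹ := by
  unfold GWTree.step
  rw [if_pos h, if_neg hu]

lemma bstep_eval_root {T : GWTree} {m : ℕ} {v : List ℕ}
    (h : ∃ i, v = i :: ([] : List ℕ) ∧ T.mem v) :
    bstep T m ([] : List ℕ) v = ((T.deg ([] : List ℕ) : ℝ≥0∞))⁻¹ := by
  unfold bstep
  rw [if_pos rfl, if_pos h]

lemma bstep_eval_parent {T : GWTree} {m : ℕ} {u v : List ℕ} (hu : u ≠ []) (hv : v = u.tail) :
    bstep T m u v = (m : ℝ≥0∞) / ((T.deg u : ℝ≥0∞) + m) := by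
  unfold bstep
  rw [if_neg hu, if_pos hv]

lemma bstep_eval_child {T : GWTree} {m : ℕ} {u v : List ℕ} (hu : u ≠ [])
    (h : ∃ i, v = i :: u ∧ T.mem v) :
    bstep T m u v = (((T.deg u : ℝ≥0∞)) + m)⁻¹ := by
  have hvt : v ≠ u.tail := cons_ne_tail hu (h.imp fun i hi => hi.1)
  unfold bstep
  rw [if_neg hu, if_neg hvt, if_pos h]

/-! ### per-step weight factors -/

open scoped Classical in
/-- the `M`-factor of a step: `2m/(m+1)` for steps to a child, `2/(m+1)` for steps
to the parent. -/
def kap (m : ℕ) (u v : List ℕ) : ℝ≥0∞ :=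
  if ∃ i : ℕ, v = i :: u then ENNReal.ofReal (2 * (m : ℝ) / ((m : ℝ) + 1))
  else ENNReal.ofReal (2 / ((m : ℝ) + 1))

/-- the correction factor `c` at visits to the root or to vertices of degree `> m`. -/
def wf (c : ℝ) (T : GWTree) (m : ℕ) (u : List ℕ) : ℝ≥0∞ :=
  ENNReal.ofReal (if u = [] ∨ m < T.deg u then c else 1)

lemma step_bounds {m : ℕ} (hm : 2 ≤ m) {T : GWTree} {u v : List ℕ}
    (hd : m ≤ T.deg u) (hne : T.step u v ≠ 0) :
    kap m u v * wf (rcOne m) T m u * bstep T m u v ≤ T.step u v ∧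
      T.step u v ≤ kap m u v * wf (rcTwo m) T m u * bstep T m u v := by
  classical
  have hm' : (2 : ℝ) ≤ (m : ℝ) := by exact_mod_cast hm
  have hd' : (m : ℝ) ≤ (T.deg u : ℝ) := by exact_mod_cast hd
  have hd0 : (0 : ℝ) < (T.deg u : ℝ) := by linarith
  rcases step_cond hne with hpar | hchild
  · -- step to the parent
    obtain ⟨hu, hv⟩ := hpar
    have hkap : kap m u v = ENNReal.ofReal (2 / ((m : ℝ) + 1)) := by
      unfold kap
      rw [if_neg (fun h => cons_ne_tail hu h hv)]
    have hstep' : T.step u v = ENNReal.ofReal (((T.deg u : ℝ) + 1)⁻¹) := by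
      rw [step_eval_nonroot hu (Or.inl ⟨hu, hv⟩), enn_inv_nat (by omega)]
      congr 1
      push_cast
      ring
    have hbst' : bstep T m u v = ENNReal.ofReal ((m : ℝ) / ((T.deg u : ℝ) + m)) := by
      rw [bstep_eval_parent hu hv, ← Nat.cast_add, enn_div_nat _ _ (by omega)]
      congr 1
      push_cast
      ring
    rw [hkap, hstep', hbst']
    by_cases hbad : m < T.deg u
    · have hwf1 : wf (rcOne m) T m u = ENNReal.ofReal (rcOne m) := by
        unfold wf; rw [if_pos (Or.inr hbad)]
      have hwf2 : wf (rcTwo m) T m u = ENNReal.ofReal (rcTwo m) := by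
        unfold wf; rw [if_pos (Or.inr hbad)]
      have hdb : (m : ℝ) + 1 ≤ (T.deg u : ℝ) := by exact_mod_cast hbad
      constructor
      · rw [hwf1, ← ENNReal.ofReal_mul (by positivity),
          ← ENNReal.ofReal_mul (mul_nonneg (by positivity) (rcOne_nonneg m))]
        apply ENNReal.ofReal_le_ofReal
        rw [eq_par_low (m : ℝ) (T.deg u : ℝ) hm' hd0]
        exact key_low _ _ hm' hd'
      · rw [hwf2, ← ENNReal.ofReal_mul (by positivity),
          ← ENNReal.ofReal_mul (mul_nonneg (by positivity) (rcTwo_nonneg m))]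
        apply ENNReal.ofReal_le_ofReal
        rw [eq_par_up (m : ℝ) (T.deg u : ℝ) hm' hd0]
        exact key_up _ _ hm' hdb
    · have hdm : ((T.deg u : ℕ) : ℝ) = (m : ℝ) := by
        exact_mod_cast congrArg (Nat.cast (R := ℝ)) (le_antisymm (not_lt.mp hbad) hd)
      have hwfg : ∀ c : ℝ, wf c T m u = 1 := by
        intro c
        unfold wf
        rw [if_neg (by rintro (h | h); exacts [hu h, hbad h])]
        exact ENNReal.ofReal_one
      constructor
      · rw [hwfg, mul_one, ← ENNReal.ofReal_mul (by positivity), hdm]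
        exact le_of_eq (congrArg _ (eq_good_par (m : ℝ) hm'))
      · rw [hwfg, mul_one, ← ENNReal.ofReal_mul (by positivity), hdm]
        exact le_of_eq (congrArg _ (eq_good_par (m : ℝ) hm')).symm
  · -- step to a child
    have hkap : kap m u v = ENNReal.ofReal (2 * (m : ℝ) / ((m : ℝ) + 1)) := by
      unfold kap
      rw [if_pos (hchild.imp fun i hi => hi.1)]
    by_cases hu : u = []
    · subst hu
      rw [hkap, step_eval_root hchild, bstep_eval_root hchild]
      have hwf1 : wf (rcOne m) T m ([] : List ℕ) = ENNReal.ofReal (rcOne m) := by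
        unfold wf; rw [if_pos (Or.inl rfl)]
      have hwf2 : wf (rcTwo m) T m ([] : List ℕ) = ENNReal.ofReal (rcTwo m) := by
        unfold wf; rw [if_pos (Or.inl rfl)]
      constructor
      · rw [hwf1, ← ENNReal.ofReal_mul (by positivity), eq_root_low (m : ℝ) hm',
          ENNReal.ofReal_one, one_mul]
      · rw [hwf2]
        have h1 : (1 : ℝ≥0∞) ≤
            ENNReal.ofReal (2 * (m : ℝ) / ((m : ℝ) + 1)) * ENNReal.ofReal (rcTwo m) := by
          rw [← ENNReal.ofReal_mul (by positivity)]
          exact enn_one_le_ofReal (key_root_up _ hm')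
        calc ((T.deg ([] : List ℕ) : ℝ≥0∞))⁻¹ = 1 * ((T.deg ([] : List ℕ) : ℝ≥0∞))⁻¹ := (one_mul _).symm
          _ ≤ _ := mul_le_mul_left h1 _
    · have hstep' : T.step u v = ENNReal.ofReal (((T.deg u : ℝ) + 1)⁻¹) := by
        rw [step_eval_nonroot hu (Or.inr hchild), enn_inv_nat (by omega)]
        congr 1
        push_cast
        ring
      have hbst' : bstep T m u v = ENNReal.ofReal ((((T.deg u : ℝ)) + m)⁻¹) := by
        rw [bstep_eval_child hu hchild, ← Nat.cast_add, enn_inv_nat (by omega)]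
        congr 1
        push_cast
        ring
      rw [hkap, hstep', hbst']
      by_cases hbad : m < T.deg u
      · have hwf1 : wf (rcOne m) T m u = ENNReal.ofReal (rcOne m) := by
          unfold wf; rw [if_pos (Or.inr hbad)]
        have hwf2 : wf (rcTwo m) T m u = ENNReal.ofReal (rcTwo m) := by
          unfold wf; rw [if_pos (Or.inr hbad)]
        have hdb : (m : ℝ) + 1 ≤ (T.deg u : ℝ) := by exact_mod_cast hbad
        constructor
        · rw [hwf1, ← ENNReal.ofReal_mul (by positivity),
          ← ENNReal.ofReal_mul (mul_nonneg (by positivity) (rcOne_nonneg m))]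
          apply ENNReal.ofReal_le_ofReal
          rw [eq_child_low (m : ℝ) (T.deg u : ℝ) hm' hd0]
          exact key_low _ _ hm' hd'
        · rw [hwf2, ← ENNReal.ofReal_mul (by positivity),
          ← ENNReal.ofReal_mul (mul_nonneg (by positivity) (rcTwo_nonneg m))]
          apply ENNReal.ofReal_le_ofReal
          rw [eq_child_up (m : ℝ) (T.deg u : ℝ) hm' hd0]
          exact key_up _ _ hm' hdb
      · have hdm : ((T.deg u : ℕ) : ℝ) = (m : ℝ) := by
          exact_mod_cast congrArg (Nat.cast (R := ℝ)) (le_antisymm (not_lt.mp hbad) hd)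
        have hwfg : ∀ c : ℝ, wf c T m u = 1 := by
          intro c
          unfold wf
          rw [if_neg (by rintro (h | h); exacts [hu h, hbad h])]
          exact ENNReal.ofReal_one
        constructor
        · rw [hwfg, mul_one, ← ENNReal.ofReal_mul (by positivity), hdm]
          exact le_of_eq (congrArg _ (eq_good_child (m : ℝ) hm'))
        · rw [hwfg, mul_one, ← ENNReal.ofReal_mul (by positivity), hdm]
          exact le_of_eq (congrArg _ (eq_good_child (m : ℝ) hm')).symm

/-! ### counting up/down steps -/

open scoped Classical in
lemma count_up (x : ℕ → List ℕ) (n : ℕ) (h0 : x 0 = []) (h2 : x (2 * n) = [])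
    (hstep : ∀ j < 2 * n,
      (∃ i : ℕ, x (j + 1) = i :: x j) ∨ (x j ≠ [] ∧ x (j + 1) = (x j).tail)) :
    ((Finset.range (2 * n)).filter fun j => ∃ i : ℕ, x (j + 1) = i :: x j).card = n := by
  have key : ∀ k, k ≤ 2 * n →
      2 * ((Finset.range k).filter fun j => ∃ i : ℕ, x (j + 1) = i :: x j).card
        = k + (x k).length := by
    intro k
    induction k with
    | zero => intro _; simp [h0]
    | succ k ih =>
      intro hk
      have ihk := ih (by omega)
      rw [Finset.range_add_one, Finset.filter_insert]
      by_cases hc : ∃ i : ℕ, x (k + 1) = i :: x k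
      · rw [if_pos hc, Finset.card_insert_of_notMem (by simp)]
        obtain ⟨i, hi⟩ := hc
        have hlen : (x (k + 1)).length = (x k).length + 1 := by rw [hi]; rfl
        omega
      · rw [if_neg hc]
        rcases hstep k (by omega) with h | ⟨hne, ht⟩
        · exact absurd h hc
        · have h1 : 0 < (x k).length := List.length_pos_iff.mpr hne
          have hlen : (x (k + 1)).length = (x k).length - 1 := by
            rw [ht, List.length_tail]
          omega
  have hfin := key (2 * n) le_rfl
  rw [h2] at hfin
  simp only [List.length_nil, Nat.add_zero] at hfin
  omega

lemma prod_eq_pow_card {M : Type*} [CommMonoid M] (s : Finset ℕ) (p : ℕ → Prop)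
    [DecidablePred p] (f : ℕ → M) (a b : M)
    (ha : ∀ j ∈ s, p j → f j = a) (hb : ∀ j ∈ s, ¬p j → f j = b) :
    ∏ j ∈ s, f j = a ^ (s.filter p).card * b ^ (s.filter fun j => ¬p j).card := by
  rw [← Finset.prod_filter_mul_prod_filter_not s p f]
  congr 1
  · rw [Finset.prod_congr rfl fun j hj =>
      ha j (Finset.mem_filter.mp hj).1 (Finset.mem_filter.mp hj).2, Finset.prod_const]
  · rw [Finset.prod_congr rfl fun j hj =>
      hb j (Finset.mem_filter.mp hj).1 (Finset.mem_filter.mp hj).2, Finset.prod_const]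

lemma Bcount_eq (T : GWTree) (m n : ℕ) (x : ℕ → List ℕ) :
    Bcount T m n x
      = ((Finset.range (2 * n)).filter
          fun j => x j = ([] : List ℕ) ∨ m < T.deg (x j)).card := by
  unfold Bcount
  rw [show {j : ℕ | j < 2 * n ∧ (x j = ([] : List ℕ) ∨ m < T.deg (x j))}
      = ↑((Finset.range (2 * n)).filter
          fun j => x j = ([] : List ℕ) ∨ m < T.deg (x j)) by
    ext j
    simp [Finset.mem_filter, Finset.mem_range]]
  exact Set.ncard_coe_finset _

/-! ### the core path-by-path comparison -/

open scoped Classical in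
lemma core_bounds (m : ℕ) (hm : 2 ≤ m) (T : GWTree) (hdeg : ∀ v, T.mem v → m ≤ T.deg v)
    (n : ℕ) (x : ℕ → List ℕ) (h0 : x 0 = []) (h2 : x (2 * n) = []) :
    (ENNReal.ofReal (4 * (m : ℝ) / ((m : ℝ) + 1) ^ 2) ^ n *
        (ENNReal.ofReal (rcOne m ^ Bcount T m n x) *
          ∏ j ∈ Finset.range (2 * n), bstep T m (x j) (x (j + 1))) ≤
      ∏ j ∈ Finset.range (2 * n), T.step (x j) (x (j + 1))) ∧
      ((∏ j ∈ Finset.range (2 * n), T.step (x j) (x (j + 1))) ≤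
      ENNReal.ofReal (4 * (m : ℝ) / ((m : ℝ) + 1) ^ 2) ^ n *
        (ENNReal.ofReal (rcTwo m ^ Bcount T m n x) *
          ∏ j ∈ Finset.range (2 * n), bstep T m (x j) (x (j + 1)))) := by
  have hm' : (2 : ℝ) ≤ (m : ℝ) := by exact_mod_cast hm
  by_cases hz : ∀ j ∈ Finset.range (2 * n), T.step (x j) (x (j + 1)) ≠ 0
  case neg =>
    push_neg at hz
    obtain ⟨j, hj, hj0⟩ := hz
    have hps : (∏ j ∈ Finset.range (2 * n), T.step (x j) (x (j + 1))) = 0 :=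
      Finset.prod_eq_zero hj hj0
    have hpb : (∏ j ∈ Finset.range (2 * n), bstep T m (x j) (x (j + 1))) = 0 :=
      Finset.prod_eq_zero hj (bstep_of_step_eq_zero hj0)
    rw [hps, hpb]
    simp
  case pos =>
    have hmem : ∀ j, j ≤ 2 * n → T.mem (x j) := by
      intro j
      induction j with
      | zero => intro _; rw [h0]; exact T.root_mem
      | succ j ih =>
        intro hj
        have hmj := ih (by omega)
        rcases step_cond (hz j (Finset.mem_range.mpr (by omega))) with ⟨hne, ht⟩ | ⟨i, hv, hmv⟩
        · obtain ⟨a, t, hat⟩ := List.exists_cons_of_ne_nil hne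
          rw [ht, hat]
          exact T.parent_mem a t (hat ▸ hmj)
        · exact hv ▸ hmv
    have hterm_lo : ∀ j ∈ Finset.range (2 * n),
        kap m (x j) (x (j + 1)) * wf (rcOne m) T m (x j) * bstep T m (x j) (x (j + 1)) ≤
          T.step (x j) (x (j + 1)) := fun j hj =>
      (step_bounds hm (hdeg _ (hmem j (le_of_lt (Finset.mem_range.mp hj)))) (hz j hj)).1
    have hterm_hi : ∀ j ∈ Finset.range (2 * n),
        T.step (x j) (x (j + 1)) ≤
          kap m (x j) (x (j + 1)) * wf (rcTwo m) T m (x j) * bstep T m (x j) (x (j + 1)) :=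
      fun j hj =>
      (step_bounds hm (hdeg _ (hmem j (le_of_lt (Finset.mem_range.mp hj)))) (hz j hj)).2
    have hdisj : ∀ j < 2 * n,
        (∃ i : ℕ, x (j + 1) = i :: x j) ∨ (x j ≠ [] ∧ x (j + 1) = (x j).tail) := by
      intro j hj
      rcases step_cond (hz j (Finset.mem_range.mpr hj)) with h | ⟨i, hv, _⟩
      · exact Or.inr h
      · exact Or.inl ⟨i, hv⟩
    have hcard := count_up x n h0 h2 hdisj
    have hcard' : ((Finset.range (2 * n)).filter
        fun j => ¬∃ i : ℕ, x (j + 1) = i :: x j).card = n := by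
      have hsum := Finset.card_filter_add_card_filter_not
        (s := Finset.range (2 * n)) (fun j => ∃ i : ℕ, x (j + 1) = i :: x j)
      rw [Finset.card_range] at hsum
      omega
    have hkap : (∏ j ∈ Finset.range (2 * n), kap m (x j) (x (j + 1)))
        = ENNReal.ofReal (4 * (m : ℝ) / ((m : ℝ) + 1) ^ 2) ^ n := by
      rw [prod_eq_pow_card (Finset.range (2 * n)) (fun j => ∃ i : ℕ, x (j + 1) = i :: x j) _
            (ENNReal.ofReal (2 * (m : ℝ) / ((m : ℝ) + 1)))
            (ENNReal.ofReal (2 / ((m : ℝ) + 1)))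
            (fun j _ h => by unfold kap; rw [if_pos h])
            (fun j _ h => by unfold kap; rw [if_neg h]),
          hcard, hcard', ← mul_pow]
      congr 1
      rw [← ENNReal.ofReal_mul (by positivity)]
      congr 1
      have hne : (m : ℝ) + 1 ≠ 0 := by linarith
      field_simp
      ring
    have hwf : ∀ c : ℝ, 0 ≤ c → (∏ j ∈ Finset.range (2 * n), wf c T m (x j))
        = ENNReal.ofReal (c ^ Bcount T m n x) := by
      intro c hc
      rw [prod_eq_pow_card (Finset.range (2 * n))
            (fun j => x j = ([] : List ℕ) ∨ m < T.deg (x j)) _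
            (ENNReal.ofReal c) 1
            (fun j _ h => by unfold wf; rw [if_pos h])
            (fun j _ h => by unfold wf; rw [if_neg h]; exact ENNReal.ofReal_one),
          one_pow, mul_one, Bcount_eq, ENNReal.ofReal_pow hc]
    constructor
    · calc ENNReal.ofReal (4 * (m : ℝ) / ((m : ℝ) + 1) ^ 2) ^ n *
          (ENNReal.ofReal (rcOne m ^ Bcount T m n x) *
            ∏ j ∈ Finset.range (2 * n), bstep T m (x j) (x (j + 1)))
          = ∏ j ∈ Finset.range (2 * n),
              (kap m (x j) (x (j + 1)) * wf (rcOne m) T m (x j) *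
                bstep T m (x j) (x (j + 1))) := by
            rw [Finset.prod_mul_distrib, Finset.prod_mul_distrib, hkap,
              hwf _ (le_of_lt (rcOne_mem hm').1)]
            ring
        _ ≤ ∏ j ∈ Finset.range (2 * n), T.step (x j) (x (j + 1)) :=
            Finset.prod_le_prod' hterm_lo
    · calc (∏ j ∈ Finset.range (2 * n), T.step (x j) (x (j + 1)))
          ≤ ∏ j ∈ Finset.range (2 * n),
              (kap m (x j) (x (j + 1)) * wf (rcTwo m) T m (x j) *
                bstep T m (x j) (x (j + 1))) := Finset.prod_le_prod' hterm_hi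
        _ = ENNReal.ofReal (4 * (m : ℝ) / ((m : ℝ) + 1) ^ 2) ^ n *
            (ENNReal.ofReal (rcTwo m ^ Bcount T m n x) *
              ∏ j ∈ Finset.range (2 * n), bstep T m (x j) (x (j + 1))) := by
            rw [Finset.prod_mul_distrib, Finset.prod_mul_distrib, hkap,
              hwf _ (le_of_lt (rcTwo_mem hm').1)]
            ring

/-! ### cylinder sets -/

/-- extension of a finite path to an infinite one -/
def ex (n : ℕ) (p : Fin (2 * n + 1) → List ℕ) : ℕ → List ℕ :=
  fun j => if h : j < 2 * n + 1 then p ⟨j, h⟩ else []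

/-- the cylinder over a finite path -/
def cyl (n : ℕ) (p : Fin (2 * n + 1) → List ℕ) : Set (ℕ → List ℕ) :=
  {ω | ∀ j ≤ 2 * n, ω j = ex n p j}

lemma measurable_cyl (n : ℕ) (p : Fin (2 * n + 1) → List ℕ) : MeasurableSet (cyl n p) := by
  have hset : cyl n p
      = ⋂ (j : ℕ), ⋂ (_ : j ≤ 2 * n), {ω : ℕ → List ℕ | ω j = ex n p j} := by
    ext ω
    simp [cyl, Set.mem_iInter]
  rw [hset]
  refine MeasurableSet.iInter fun j => MeasurableSet.iInter fun _ => ?_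
  have hmeas : Measurable fun ω : ℕ → List ℕ => ω j := measurable_pi_apply j
  exact hmeas (MeasurableSpace.measurableSet_top (s := ({SBAux.ex n p j} : Set (List ℕ))))

lemma disj_cyl {n : ℕ} {p q : Fin (2 * n + 1) → List ℕ} (hpq : p ≠ q) :
    Disjoint (cyl n p) (cyl n q) := by
  rw [Set.disjoint_left]
  intro ω h1 h2
  apply hpq
  funext i
  have hlt := i.isLt
  have hi : (i : ℕ) ≤ 2 * n := by omega
  have e1 := h1 i hi
  have e2 := h2 i hi
  unfold ex at e1 e2
  rw [dif_pos hlt] at e1 e2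
  simp only [Fin.eta] at e1 e2
  exact e1.symm.trans e2

lemma Bcount_congr {T : GWTree} {m n : ℕ} {ω y : ℕ → List ℕ}
    (h : ∀ j < 2 * n, ω j = y j) : Bcount T m n ω = Bcount T m n y := by
  unfold Bcount
  congr 1
  ext j
  exact and_congr_right fun hj => by rw [h j hj]

end SBAux

/-- comparison between the simple and the biased random walk on trees of
minimal degree `m`: `Mⁿ E_BRW[c₁^{B_n} 1_A] ≤ SRW(A) ≤ Mⁿ E_BRW[c₂^{B_n} 1_A]` with
`M = 4m/(m+1)²`, for constants `c₁, c₂ ∈ (0,1)` depending only on `m`. -/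
theorem srw_brw_comparison (m : ℕ) (hm : 2 ≤ m) :
    ∃ c₁ c₂ : ℝ, c₁ ∈ Set.Ioo (0 : ℝ) 1 ∧ c₂ ∈ Set.Ioo (0 : ℝ) 1 ∧
      ∀ T : GWTree, survives T → (∀ v, T.mem v → m ≤ T.deg v) →
        ∀ (n : ℕ) (A : Set (ℕ → List ℕ)),
          (∀ ω ω' : ℕ → List ℕ, (∀ j, j ≤ 2 * n → ω j = ω' j) → (ω ∈ A ↔ ω' ∈ A)) →
          (∀ ω ∈ A, ω 0 = ([] : List ℕ) ∧ ω (2 * n) = ([] : List ℕ)) →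
          ∀ P Q : Measure (ℕ → List ℕ), IsSRW T P → IsBRW T m Q →
            ENNReal.ofReal (4 * (m : ℝ) / ((m : ℝ) + 1) ^ 2) ^ n *
                ∫⁻ ω in A, ENNReal.ofReal (c₁ ^ Bcount T m n ω) ∂Q ≤ P A ∧
            P A ≤ ENNReal.ofReal (4 * (m : ℝ) / ((m : ℝ) + 1) ^ 2) ^ n *
                ∫⁻ ω in A, ENNReal.ofReal (c₂ ^ Bcount T m n ω) ∂Q := by
  have hm' : (2 : ℝ) ≤ (m : ℝ) := by exact_mod_cast hm
  refine ⟨SBAux.rcOne m, SBAux.rcTwo m, SBAux.rcOne_mem hm', SBAux.rcTwo_mem hm', ?_⟩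
  intro T _hsurv hdeg n A hAdep hA0 P Q hP hQ
  classical
  -- decomposition of `A` into cylinders
  have hdecomp : A = ⋃ p : {p : Fin (2 * n + 1) → List ℕ // SBAux.ex n p ∈ A},
      SBAux.cyl n p.1 := by
    ext ω
    constructor
    · intro hω
      have hagree : ∀ j ≤ 2 * n, ω j = SBAux.ex n (fun i => ω i) j := by
        intro j hj
        unfold SBAux.ex
        rw [dif_pos (by omega : j < 2 * n + 1)]
      have hp : SBAux.ex n (fun i : Fin (2 * n + 1) => ω i) ∈ A :=
        (hAdep ω _ hagree).1 hω
      exact Set.mem_iUnion.2 ⟨⟨fun i => ω i, hp⟩, hagree⟩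
    · intro hω
      obtain ⟨p, hp⟩ := Set.mem_iUnion.1 hω
      exact (hAdep ω (SBAux.ex n p.1) hp).2 p.2
  have hmeasC : ∀ p : {p : Fin (2 * n + 1) → List ℕ // SBAux.ex n p ∈ A},
      MeasurableSet (SBAux.cyl n p.1) := fun p => SBAux.measurable_cyl n p.1
  have hdisjC : Pairwise (Function.onFun Disjoint fun p :
      {p : Fin (2 * n + 1) → List ℕ // SBAux.ex n p ∈ A} => SBAux.cyl n p.1) :=
    fun p q hpq => SBAux.disj_cyl fun h => hpq (Subtype.ext h)
  -- cylinder probabilities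
  have hPc : ∀ p : {p : Fin (2 * n + 1) → List ℕ // SBAux.ex n p ∈ A},
      P (SBAux.cyl n p.1) = ∏ j ∈ Finset.range (2 * n),
        T.step (SBAux.ex n p.1 j) (SBAux.ex n p.1 (j + 1)) := by
    intro p
    have h := hP.2 (SBAux.ex n p.1) (2 * n)
    rw [if_pos (hA0 _ p.2).1, one_mul] at h
    exact h
  have hQc : ∀ p : {p : Fin (2 * n + 1) → List ℕ // SBAux.ex n p ∈ A},
      Q (SBAux.cyl n p.1) = ∏ j ∈ Finset.range (2 * n),
        bstep T m (SBAux.ex n p.1 j) (SBAux.ex n p.1 (j + 1)) := by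
    intro p
    have h := hQ.2 (SBAux.ex n p.1) (2 * n)
    rw [if_pos (hA0 _ p.2).1, one_mul] at h
    exact h
  have hcore := fun p : {p : Fin (2 * n + 1) → List ℕ // SBAux.ex n p ∈ A} =>
    SBAux.core_bounds m hm T hdeg n (SBAux.ex n p.1) (hA0 _ p.2).1 (hA0 _ p.2).2
  have hPA : P A = ∑' p : {p : Fin (2 * n + 1) → List ℕ // SBAux.ex n p ∈ A},
      P (SBAux.cyl n p.1) := by
    conv_lhs => rw [hdecomp]
    exact measure_iUnion hdisjC hmeasC
  have hint : ∀ c : ℝ, ∫⁻ ω in A, ENNReal.ofReal (c ^ Bcount T m n ω) ∂Q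
      = ∑' p : {p : Fin (2 * n + 1) → List ℕ // SBAux.ex n p ∈ A},
          ENNReal.ofReal (c ^ Bcount T m n (SBAux.ex n p.1)) * Q (SBAux.cyl n p.1) := by
    intro c
    conv_lhs => rw [hdecomp]
    rw [lintegral_iUnion hmeasC hdisjC]
    refine tsum_congr fun p => ?_
    calc ∫⁻ ω in SBAux.cyl n p.1, ENNReal.ofReal (c ^ Bcount T m n ω) ∂Q
        = ∫⁻ _ω in SBAux.cyl n p.1,
            ENNReal.ofReal (c ^ Bcount T m n (SBAux.ex n p.1)) ∂Q :=
          setLIntegral_congr_fun (hmeasC p) (fun ω hω => by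
            rw [SBAux.Bcount_congr (fun j hj => hω j (Nat.le_of_lt hj))])
      _ = ENNReal.ofReal (c ^ Bcount T m n (SBAux.ex n p.1)) * Q (SBAux.cyl n p.1) :=
          setLIntegral_const _ _
  constructor
  · rw [hPA, hint (SBAux.rcOne m), ← ENNReal.tsum_mul_left]
    refine ENNReal.tsum_le_tsum fun p => ?_
    rw [hPc p, hQc p]
    exact (hcore p).1
  · rw [hPA, hint (SBAux.rcTwo m), ← ENNReal.tsum_mul_left]
    refine ENNReal.tsum_le_tsum fun p => ?_
    rw [hPc p, hQc p]
    exact (hcore p).2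

end
end
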